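/- arXiv:1809.00133 — 5 statements merged into one kernel-verified Lean document; each statement's English description precedes it below -/
import Mathlib

section
/- If I has linear relations, then the syzygy graph G_I is a connected graph. -/
open MvPolynomial Finset

attribute [local instance] Classical.propDecidable

/-- The (first linear) syzygy graph of a squarefree monomial ideal whose generators
have supports `F i`, all of cardinality `d`: vertices are the generators, and two
generators are adjacent iff their supports meet in `d - 1` elements (equivalently,
there are variables `x, y` with `x * u i = y * u j`). -/
def syzGraph {n m : ℕ} (F : Fin m → Finset (Fin n)) (d : ℕ) : SimpleGraph (Fin m) where
  Adj i j := i ≠ j ∧ (F i ∩ F j).card + 1 = d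
  symm := by
    constructor
    intro i j h
    exact ⟨h.1.symm, by rw [Finset.inter_comm]; exact h.2⟩
  loopless := by constructor; intro i h; exact h.1 rfl

/-- The map `φ : S^ι → S`, `e i ↦ u i`. -/
noncomputable def phi {R : Type*} [CommRing R] {ι : Type*} [Fintype ι] (u : ι → R) :
    (ι → R) →ₗ[R] R where
  toFun c := ∑ i, c i * u i
  map_add' a b := by simp [add_mul, Finset.sum_add_distrib]
  map_smul' r a := by simp [Finset.mul_sum, mul_assoc]

/-- The set of linear syzygies `x_a e_i - x_b e_j` with `x_a u_i = x_b u_j`. -/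
def linSyz {k : Type*} [Field k] {n : ℕ} {ι : Type*} [DecidableEq ι]
    (u : ι → MvPolynomial (Fin n) k) : Set (ι → MvPolynomial (Fin n) k) :=
  { w | ∃ (i j : ι) (a b : Fin n), X a * u i = X b * u j ∧
      w = Pi.single i (X a) - Pi.single j (X b) }

/-- `I = (u i : i)` has linear relations: `ker φ` is generated by the linear syzygies. -/
def HasLinRel {k : Type*} [Field k] {n : ℕ} {ι : Type*} [Fintype ι] [DecidableEq ι]
    (u : ι → MvPolynomial (Fin n) k) : Prop :=
  Submodule.span (MvPolynomial (Fin n) k) (linSyz u) = LinearMap.ker (phi u)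

/-- `I = (u 1, …, u m)` has linear quotients: for some ordering of the generators, each
colon ideal `(u_{σ 1}, …, u_{σ (i-1)}) : u_{σ i}` is generated by a subset of the variables. -/
def LinQuot {k : Type*} [Field k] {n m : ℕ} (u : Fin m → MvPolynomial (Fin n) k) : Prop :=
  ∃ σ : Equiv.Perm (Fin m), ∀ i : Fin m, i.val ≠ 0 →
    ∃ T : Set (Fin n),
      Submodule.colon (Ideal.span ((fun j => u (σ j)) '' {j : Fin m | j < i}))
        (Ideal.span {u (σ i)}) = Ideal.span (X '' T)

/-- Variable-decomposability of a monomial ideal given by its (finite) minimal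
generating set `G`: either `G` is a singleton (principal ideal), or there is a shedding
variable `x l` such that both `I_{x l}` and `I^{x l}` are variable-decomposable. -/
inductive VarDecomp {k : Type*} [Field k] {n : ℕ} :
    Finset (MvPolynomial (Fin n) k) → Prop
  | principal (u : MvPolynomial (Fin n) k) : VarDecomp {u}
  | shed (G : Finset (MvPolynomial (Fin n) k)) (l : Fin n)
      (hne : (G.filter fun u => ¬ X l ∣ u).Nonempty)
      (hshed : ∀ u ∈ G.filter (fun u => ¬ X l ∣ u),
        ∃ v ∈ G.filter (fun u => X l ∣ u),
          Submodule.colon (Ideal.span {v}) (Ideal.span {u}) = Ideal.span {X l})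
      (h1 : VarDecomp (G.filter fun u => ¬ X l ∣ u))
      (h2 : VarDecomp (G.filter fun u => X l ∣ u)) : VarDecomp G


section Aux

lemma phi_single {R : Type*} [CommRing R] {ι : Type*} [Fintype ι] [DecidableEq ι]
    (u : ι → R) (i : ι) (p : R) : phi u (Pi.single i p) = p * u i := by
  have hphi : phi u (Pi.single i p) = ∑ j, (Pi.single i p : ι → R) j * u j := rfl
  rw [hphi, Fintype.sum_eq_single i (fun j hj => by rw [Pi.single_eq_of_ne hj, zero_mul]),
    Pi.single_eq_same]

lemma prodX_eq_monomial {k : Type*} [Field k] {n : ℕ} (G : Finset (Fin n)) :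
    ∏ l ∈ G, (X l : MvPolynomial (Fin n) k)
      = monomial (∑ l ∈ G, Finsupp.single l 1) 1 := by
  rw [monomial_sum_one]
  refine Finset.prod_congr rfl fun l _ => ?_
  rw [← X_pow_eq_monomial, pow_one]

lemma indicator_sum {n : ℕ} (G : Finset (Fin n)) (x : Fin n) :
    (∑ l ∈ G, Finsupp.single l (1 : ℕ)) x = if x ∈ G then 1 else 0 := by
  classical
  rw [Finset.sum_apply']
  rw [Finset.sum_congr rfl (fun l _ => Finsupp.single_apply)]
  simp [Finset.sum_ite_eq]

lemma adj_of_syz {k : Type*} [Field k] {n m d : ℕ}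
    (F : Fin m → Finset (Fin n)) (hinj : Function.Injective F)
    (hcard : ∀ i, (F i).card = d) {i j : Fin m} (hij : i ≠ j) {a b : Fin n}
    (hs : X a * (∏ l ∈ F i, (X l : MvPolynomial (Fin n) k))
        = X b * ∏ l ∈ F j, (X l : MvPolynomial (Fin n) k)) :
    (syzGraph F d).Adj i j := by
  classical
  rw [prodX_eq_monomial, prodX_eq_monomial,
    show (X a : MvPolynomial (Fin n) k) = X a ^ 1 from (pow_one _).symm,
    show (X b : MvPolynomial (Fin n) k) = X b ^ 1 from (pow_one _).symm,
    ← monomial_single_add, ← monomial_single_add] at hs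
  have key : Finsupp.single a 1 + ∑ l ∈ F i, Finsupp.single l 1
      = Finsupp.single b 1 + ∑ l ∈ F j, Finsupp.single l 1 := by
    rcases (monomial_eq_monomial_iff _ _ _ _).mp hs with ⟨h1, _⟩ | ⟨h1, _⟩
    · exact h1
    · exact absurd h1 one_ne_zero
  have hpt : ∀ x : Fin n, (if a = x then 1 else 0) + (if x ∈ F i then 1 else 0)
      = (if b = x then 1 else 0) + (if x ∈ F j then 1 else 0) := by
    intro x
    have := DFunLike.congr_fun key x
    rwa [Finsupp.add_apply, Finsupp.add_apply, indicator_sum, indicator_sum,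
      Finsupp.single_apply, Finsupp.single_apply] at this
  have hab : a ≠ b := by
    rintro rfl
    refine hij (hinj (Finset.ext fun x => ?_))
    have := hpt x
    constructor <;> intro hx <;> by_contra hx' <;> simp [hx, hx'] at this
  have hai : a ∉ F i := by
    have := hpt a
    intro hai
    have hba : ¬ (b = a) := fun e => hab e.symm
    by_cases haj : a ∈ F j <;> simp [hai, haj, hba] at this
  have haj : a ∈ F j := by
    have := hpt a
    by_contra haj
    have hba : ¬ (b = a) := fun e => hab e.symm
    simp [hai, haj, hba] at this
  have hbj : b ∉ F j := by
    have := hpt b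
    intro hbj
    by_cases hbi : b ∈ F i <;> simp [hbi, hbj, hab] at this
  have hbi : b ∈ F i := by
    have := hpt b
    by_contra hbi
    simp [hbi, hbj, hab] at this
  have hint : F i ∩ F j = (F i).erase b := by
    ext x
    simp only [Finset.mem_inter, Finset.mem_erase]
    constructor
    · rintro ⟨hx1, hx2⟩
      exact ⟨fun e => hbj (e ▸ hx2), hx1⟩
    · rintro ⟨hxb, hx1⟩
      refine ⟨hx1, ?_⟩
      have := hpt x
      have hax : ¬ (a = x) := fun e => hai (e ▸ hx1)
      have hbx : ¬ (b = x) := fun e => hxb e.symm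
      by_contra hxj
      simp [hax, hbx, hx1, hxj] at this
  have hd : 0 < d := by
    rw [← hcard i]
    exact Finset.card_pos.mpr ⟨b, hbi⟩
  refine ⟨hij, ?_⟩
  rw [hint, Finset.card_erase_of_mem hbi, hcard i]
  omega

end Aux

/-- If `I` has linear relations, then the syzygy graph `G_I` is connected. -/
theorem stmt1 {k : Type*} [Field k] {n m d : ℕ} (hm : 0 < m)
    (F : Fin m → Finset (Fin n)) (hinj : Function.Injective F)
    (hcard : ∀ i, (F i).card = d)
    (h : HasLinRel (fun i : Fin m => ∏ l ∈ F i, (X l : MvPolynomial (Fin n) k))) :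
    (syzGraph F d).Connected := by
  classical
  set u : Fin m → MvPolynomial (Fin n) k := fun i => ∏ l ∈ F i, X l with hu
  have hu0 : ∀ i, u i ≠ 0 := fun i =>
    Finset.prod_ne_zero_iff.mpr fun l _ => X_ne_zero l
  set v0 : Fin m := ⟨0, hm⟩ with hv0
  set G := syzGraph F d with hG
  set u' : Fin m → MvPolynomial (Fin n) k :=
    fun i => if G.Reachable v0 i then u i else 0 with hu'
  have hker : ∀ w ∈ linSyz u, w ∈ LinearMap.ker (phi u') := by
    rintro w ⟨i, j, a, b, hab, rfl⟩
    rw [LinearMap.mem_ker, map_sub, phi_single, phi_single]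
    by_cases hij : i = j
    · subst hij
      have hXa : (X a : MvPolynomial (Fin n) k) = X b :=
        mul_right_cancel₀ (hu0 i) hab
      rw [hXa, sub_self]
    · have hadj : G.Adj i j := adj_of_syz F hinj hcard hij hab
      have hre : G.Reachable v0 i ↔ G.Reachable v0 j :=
        ⟨fun r => r.trans hadj.reachable, fun r => r.trans hadj.symm.reachable⟩
      by_cases hr : G.Reachable v0 i
      · rw [hu']
        simp only [hr, hre.mp hr, if_pos]
        rw [hab, sub_self]
      · have hrj : ¬ G.Reachable v0 j := fun x => hr (hre.mpr x)
        rw [hu']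
        simp only [if_neg hr, if_neg hrj, mul_zero, sub_self]
  have hspan : LinearMap.ker (phi u) ≤ LinearMap.ker (phi u') := by
    rw [← h]
    exact Submodule.span_le.mpr hker
  have hreach : ∀ j, G.Reachable v0 j := by
    intro j
    by_contra hj
    have hwk : Pi.single v0 (u j) - Pi.single j (u v0) ∈ LinearMap.ker (phi u) := by
      rw [LinearMap.mem_ker, map_sub, phi_single, phi_single]
      ring
    have h2 := hspan hwk
    rw [LinearMap.mem_ker, map_sub, phi_single, phi_single, hu'] at h2
    simp only [SimpleGraph.Reachable.refl v0, if_pos, hj, if_neg, not_false_iff,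
      mul_zero, sub_zero] at h2
    exact mul_ne_zero (hu0 j) (hu0 v0) h2
  have : Nonempty (Fin m) := ⟨v0⟩
  exact ⟨fun i j => (hreach i).symm.trans (hreach j)⟩
end

section
/- The ideal I has linear relations if and only if, for all minimal generators u, v of I, the induced subgraph G_I^{(u,v)} is connected. -/
open MvPolynomial Finset

attribute [local instance] Classical.propDecidable

namespace Stmt2Aux

variable {n m d : ℕ}

/-- Indicator finsupp of a finset. -/
noncomputable def ee (A : Finset (Fin n)) : Fin n →₀ ℕ := ∑ l ∈ A, Finsupp.single l 1

lemma ee_apply (A : Finset (Fin n)) (l : Fin n) : ee A l = if l ∈ A then 1 else 0 := by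
  classical
  simp only [ee, Finsupp.finset_sum_apply, Finsupp.single_apply]
  simp [Finset.sum_ite_eq]

lemma ee_support (A : Finset (Fin n)) : (ee A).support = A := by
  ext l; simp [Finsupp.mem_support_iff, ee_apply]

lemma ee_le_iff {A : Finset (Fin n)} {μ : Fin n →₀ ℕ} :
    ee A ≤ μ ↔ A ⊆ μ.support := by
  rw [Finsupp.le_iff]
  constructor
  · intro h l hl
    rw [Finsupp.mem_support_iff]
    have := h l (by simp [ee_support, hl])
    rw [ee_apply, if_pos hl] at this
    omega
  · intro h l hl
    rw [ee_support] at hl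
    rw [ee_apply, if_pos hl]
    have := h hl
    rw [Finsupp.mem_support_iff] at this
    omega

lemma ee_mono {A B : Finset (Fin n)} (h : A ⊆ B) : ee A ≤ ee B := by
  rw [ee_le_iff, ee_support]
  exact h

lemma ee_inj {A B : Finset (Fin n)} (h : ee A = ee B) : A = B := by
  rw [← ee_support A, ← ee_support B, h]

lemma ee_union_of_disjoint {A B : Finset (Fin n)} (h : Disjoint A B) :
    ee (A ∪ B) = ee A + ee B := by
  classical
  rw [ee, Finset.sum_union h]; rfl

lemma ee_insert {A : Finset (Fin n)} {p : Fin n} (hp : p ∉ A) :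
    ee (insert p A) = Finsupp.single p 1 + ee A := by
  classical
  rw [ee, Finset.sum_insert hp]; rfl

lemma prod_X_eq {k : Type*} [Field k] (A : Finset (Fin n)) :
    (∏ l ∈ A, (X l : MvPolynomial (Fin n) k)) = monomial (ee A) 1 := by
  classical
  induction A using Finset.induction with
  | empty => simp [ee]
  | insert a s hp ih =>
    rw [Finset.prod_insert hp, ih, ee_insert hp, X, monomial_mul, one_mul]

/-- The syzygy graph restricted to generators with support inside `S`. -/
def graphAt (F : Fin m → Finset (Fin n)) (d : ℕ) (S : Finset (Fin n)) :
    SimpleGraph (Fin m) where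
  Adj a b := (syzGraph F d).Adj a b ∧ F a ⊆ S ∧ F b ⊆ S
  symm := by constructor; rintro a b ⟨h, ha, hb⟩; exact ⟨h.symm, hb, ha⟩
  loopless := by constructor; rintro a ⟨h, -⟩; exact (syzGraph F d).irrefl h

lemma graphAt_mono {F : Fin m → Finset (Fin n)} {S T : Finset (Fin n)} (h : S ⊆ T) :
    graphAt F d S ≤ graphAt F d T := by
  rintro a b ⟨hadj, ha, hb⟩; exact ⟨hadj, ha.trans h, hb.trans h⟩

lemma reach_of_induce_reach {F : Fin m → Finset (Fin n)} {S : Finset (Fin n)}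
    {x y : {w : Fin m | F w ⊆ S}}
    (h : ((syzGraph F d).induce {w : Fin m | F w ⊆ S}).Reachable x y) :
    (graphAt F d S).Reachable x.1 y.1 := by
  let f : (syzGraph F d).induce {w : Fin m | F w ⊆ S} →g graphAt F d S :=
    ⟨fun z => z.1, fun {a b} hab => ⟨hab, a.2, b.2⟩⟩
  exact h.map f

lemma induce_reach_of_walk {F : Fin m → Finset (Fin n)} {S : Finset (Fin n)} :
    ∀ {a b : Fin m}, (graphAt F d S).Walk a b → ∀ (ha : F a ⊆ S) (hb : F b ⊆ S),
      ((syzGraph F d).induce {w : Fin m | F w ⊆ S}).Reachable ⟨a, ha⟩ ⟨b, hb⟩ := by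
  intro a b w
  induction w with
  | nil => intro ha hb; rfl
  | cons h p ih =>
    rename_i x y z
    intro ha hb
    have hy : F y ⊆ S := h.2.2
    exact (SimpleGraph.Adj.reachable (by exact h.1 : ((syzGraph F d).induce _).Adj ⟨x, ha⟩ ⟨y, hy⟩)).trans (ih hy hb)

/-- From reachability at unions of pairs of supports, connectivity of all induced graphs. -/
lemma conn_of_P {F : Fin m → Finset (Fin n)}
    (hP : ∀ i j : Fin m, (graphAt F d (F i ∪ F j)).Reachable i j) :
    ∀ i j : Fin m,
      ((syzGraph F d).induce {w : Fin m | F w ⊆ F i ∪ F j}).Connected := by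
  intro i j
  rw [SimpleGraph.connected_iff]
  refine ⟨?_, ⟨⟨i, by simp⟩⟩⟩
  rintro ⟨a, ha⟩ ⟨b, hb⟩
  have h1 : (graphAt F d (F a ∪ F b)).Reachable a b := hP a b
  have h2 : (graphAt F d (F i ∪ F j)).Reachable a b :=
    h1.mono (graphAt_mono (Finset.union_subset ha hb))
  exact h2.elim fun w => induce_reach_of_walk w ha hb

/-- From connectivity of all induced pair-graphs, reachability inside any `S`. -/
lemma reach_of_conn {F : Fin m → Finset (Fin n)}
    (hC : ∀ i j : Fin m,
      ((syzGraph F d).induce {w : Fin m | F w ⊆ F i ∪ F j}).Connected)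
    {S : Finset (Fin n)} {a b : Fin m} (ha : F a ⊆ S) (hb : F b ⊆ S) :
    (graphAt F d S).Reachable a b := by
  have h := (hC a b).preconnected ⟨a, by simp⟩ ⟨b, by simp⟩
  have h2 := reach_of_induce_reach (d := d) h
  exact h2.mono (graphAt_mono (Finset.union_subset ha hb))


section Field
variable {k : Type*} [Field k]

/-- Edge differences of `graphAt F d S`, as vectors in `Fin m → k`. -/
def egens (F : Fin m → Finset (Fin n)) (d : ℕ) (S : Finset (Fin n)) : Set (Fin m → k) :=
  {v | ∃ x y, (graphAt F d S).Adj x y ∧ v = (Pi.single x 1 - Pi.single y 1 : Fin m → k)}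

lemma mem_span_of_reach {F : Fin m → Finset (Fin n)} {S : Finset (Fin n)} {a b : Fin m}
    (h : (graphAt F d S).Reachable a b) :
    ((Pi.single a 1 - Pi.single b 1 : Fin m → k)) ∈ Submodule.span k (egens F d S) := by
  obtain ⟨w⟩ := h
  induction w with
  | nil => rw [sub_self]; exact Submodule.zero_mem _
  | cons hadj p ih =>
    rename_i x y z
    have h1 : ((Pi.single x 1 - Pi.single y 1 : Fin m → k)) ∈ Submodule.span k (egens F d S) :=
      Submodule.subset_span ⟨x, y, hadj, rfl⟩
    have := Submodule.add_mem _ h1 ih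
    rwa [sub_add_sub_cancel] at this

lemma reach_of_mem_span {F : Fin m → Finset (Fin n)} {S : Finset (Fin n)} {a b : Fin m}
    (h : ((Pi.single a 1 - Pi.single b 1 : Fin m → k)) ∈ Submodule.span k (egens F d S)) :
    (graphAt F d S).Reachable a b := by
  classical
  set C : Finset (Fin m) := Finset.univ.filter (fun x => (graphAt F d S).Reachable a x) with hC
  have hmemC : ∀ x, x ∈ C ↔ (graphAt F d S).Reachable a x := by
    intro x; simp [hC]
  let f : (Fin m → k) →ₗ[k] k :=
    { toFun := fun v => ∑ x ∈ C, v x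
      map_add' := by intros; simp [Finset.sum_add_distrib]
      map_smul' := by intros; simp [Finset.mul_sum] }
  have hsingle : ∀ x : Fin m, f (Pi.single x 1) = if x ∈ C then 1 else 0 := by
    intro x
    simp only [f, LinearMap.coe_mk, AddHom.coe_mk]
    simp [Pi.single_apply, Finset.sum_ite_eq']
  have hker : Submodule.span k (egens F d S) ≤ LinearMap.ker f := by
    rw [Submodule.span_le]
    rintro v ⟨x, y, hadj, rfl⟩
    have hxy : (x ∈ C) ↔ (y ∈ C) := by
      rw [hmemC, hmemC]
      exact ⟨fun hr => hr.trans hadj.reachable, fun hr => hr.trans hadj.symm.reachable⟩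
    simp only [SetLike.mem_coe, LinearMap.mem_ker, map_sub, hsingle]
    by_cases hx : x ∈ C
    · rw [if_pos hx, if_pos (hxy.1 hx), sub_self]
    · rw [if_neg hx, if_neg (fun hy => hx (hxy.2 hy)), sub_self]
  have h0 : f ((Pi.single a 1 - Pi.single b 1 : Fin m → k)) = 0 := hker h
  rw [map_sub, hsingle, hsingle, if_pos ((hmemC a).2 (SimpleGraph.Reachable.refl a))] at h0
  by_cases hb : b ∈ C
  · exact (hmemC b).1 hb
  · rw [if_neg hb, sub_zero] at h0
    exact absurd h0 one_ne_zero


/-- Structure of an equation `single p 1 + ee A = single q 1 + ee B` with `A ≠ B`. -/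
lemma indicator_eq {p q : Fin n} {A B : Finset (Fin n)} (hAB : A ≠ B)
    (hE : Finsupp.single p 1 + ee A = Finsupp.single q 1 + ee B) :
    p ≠ q ∧ p ∉ A ∧ p ∈ B ∧ insert p A = A ∪ B := by
  classical
  have hpq : p ≠ q := by
    rintro rfl
    exact hAB (ee_inj (add_left_cancel hE))
  have hp := DFunLike.congr_fun hE p
  rw [Finsupp.add_apply, Finsupp.add_apply, Finsupp.single_eq_same,
    Finsupp.single_eq_of_ne' (Ne.symm hpq), ee_apply, ee_apply] at hp
  have hpA : p ∉ A := by
    intro h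
    rw [if_pos h] at hp
    split_ifs at hp <;> omega
  have hpB : p ∈ B := by
    by_contra h
    rw [if_neg hpA, if_neg h] at hp
    omega
  have hq := DFunLike.congr_fun hE q
  rw [Finsupp.add_apply, Finsupp.add_apply, Finsupp.single_eq_same,
    Finsupp.single_eq_of_ne' hpq, ee_apply, ee_apply] at hq
  have hqB : q ∉ B := by
    intro h
    rw [if_pos h] at hq
    split_ifs at hq <;> omega
  have hs : insert p A = insert q B := by
    have h2 := congrArg Finsupp.support hE
    rw [Finsupp.support_add_eq, Finsupp.support_add_eq] at h2
    · rw [Finsupp.support_single_ne_zero _ one_ne_zero, Finsupp.support_single_ne_zero _ one_ne_zero,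
        ee_support, ee_support, ← Finset.insert_eq, ← Finset.insert_eq] at h2
      exact h2
    · rw [Finsupp.support_single_ne_zero _ one_ne_zero, ee_support]
      exact Finset.disjoint_singleton_left.mpr hqB
    · rw [Finsupp.support_single_ne_zero _ one_ne_zero, ee_support]
      exact Finset.disjoint_singleton_left.mpr hpA
  refine ⟨hpq, hpA, hpB, ?_⟩
  apply Finset.Subset.antisymm
  · exact Finset.insert_subset (Finset.mem_union_right _ hpB) Finset.subset_union_left
  · refine Finset.union_subset (Finset.subset_insert _ _) ?_
    rw [hs]
    exact Finset.subset_insert _ _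

variable {F : Fin m → Finset (Fin n)}

/-- The generators. -/
noncomputable def uu (F : Fin m → Finset (Fin n)) : Fin m → MvPolynomial (Fin n) k :=
  fun i => ∏ l ∈ F i, X l

lemma uu_eq (i : Fin m) : uu (k := k) F i = monomial (ee (F i)) 1 := prod_X_eq _

/-- Structure extracted from a linear syzygy equation. -/
lemma syz_data (hinj : Function.Injective F) (hcard : ∀ i, (F i).card = d)
    {a b : Fin m} {p q : Fin n} (hab : a ≠ b)
    (hpq : X p * uu (k := k) F a = X q * uu F b) :
    (syzGraph F d).Adj a b ∧ p ∉ F a ∧ q ∉ F b ∧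
      Finsupp.single p 1 + ee (F a) = ee (F a ∪ F b) ∧
      Finsupp.single q 1 + ee (F b) = ee (F a ∪ F b) := by
  classical
  have hFab : F a ≠ F b := fun h => hab (hinj h)
  rw [uu_eq, uu_eq, X, X, monomial_mul, monomial_mul, one_mul] at hpq
  have hE : Finsupp.single p 1 + ee (F a) = Finsupp.single q 1 + ee (F b) :=
    monomial_left_injective one_ne_zero hpq
  obtain ⟨hpq', hpA, hpB, hU⟩ := indicator_eq hFab hE
  obtain ⟨hqp', hqB, hqA, hV⟩ := indicator_eq (Ne.symm hFab) hE.symm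
  have hV' : insert q (F b) = F a ∪ F b := by rw [hV, Finset.union_comm]
  have hcardU : (F a ∪ F b).card = d + 1 := by
    rw [← hU, Finset.card_insert_of_notMem hpA, hcard a]
  have hadj : (syzGraph F d).Adj a b := by
    refine ⟨hab, ?_⟩
    have h1 := Finset.card_inter_add_card_union (F a) (F b)
    rw [hcardU, hcard a, hcard b] at h1
    have hd : 0 < d := by
      have : (F b).Nonempty := ⟨p, hpB⟩
      rw [← hcard b]
      exact Finset.card_pos.mpr this
    omega
  refine ⟨hadj, hpA, hqB, ?_, ?_⟩
  · rw [← hU, ee_insert hpA]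
  · rw [← hV', ee_insert hqB]

/-- Converse: from adjacency produce a linear syzygy. -/
lemma adj_syz (hcard : ∀ i, (F i).card = d) {a b : Fin m}
    (h : (syzGraph F d).Adj a b) :
    ∃ p q : Fin n, X p * uu (k := k) F a = X q * uu F b ∧ p ∉ F a ∧ q ∉ F b ∧
      Finsupp.single p 1 + ee (F a) = ee (F a ∪ F b) ∧
      Finsupp.single q 1 + ee (F b) = ee (F a ∪ F b) := by
  classical
  have h1 : (F b \ F a).card = 1 := by
    have := Finset.card_sdiff_add_card_inter (F b) (F a)
    rw [hcard b, Finset.inter_comm] at this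
    have h2 := h.2
    omega
  have h2 : (F a \ F b).card = 1 := by
    have := Finset.card_sdiff_add_card_inter (F a) (F b)
    rw [hcard a] at this
    have h2 := h.2
    omega
  obtain ⟨p, hp⟩ := Finset.card_eq_one.mp h1
  obtain ⟨q, hq⟩ := Finset.card_eq_one.mp h2
  have hpA : p ∉ F a := by
    have : p ∈ F b \ F a := by rw [hp]; exact Finset.mem_singleton_self p
    exact (Finset.mem_sdiff.mp this).2
  have hqB : q ∉ F b := by
    have hx : q ∈ F a \ F b := by rw [hq]; exact Finset.mem_singleton_self q
    exact (Finset.mem_sdiff.mp hx).2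
  have hUp : insert p (F a) = F a ∪ F b := by
    rw [Finset.insert_eq, Finset.union_comm {p} (F a), ← hp, Finset.union_sdiff_self_eq_union]
  have hUq : insert q (F b) = F a ∪ F b := by
    rw [Finset.insert_eq, Finset.union_comm {q} (F b), ← hq, Finset.union_sdiff_self_eq_union,
      Finset.union_comm]
  have e1 : Finsupp.single p 1 + ee (F a) = ee (F a ∪ F b) := by rw [← hUp, ee_insert hpA]
  have e2 : Finsupp.single q 1 + ee (F b) = ee (F a ∪ F b) := by rw [← hUq, ee_insert hqB]
  refine ⟨p, q, ?_, hpA, hqB, e1, e2⟩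
  rw [uu_eq, uu_eq, X, X, monomial_mul, monomial_mul, one_mul, e1, e2]

/-- Multigraded projection in multidegree `μ`. -/
noncomputable def piM (F : Fin m → Finset (Fin n)) (μ : Fin n →₀ ℕ) :
    (Fin m → MvPolynomial (Fin n) k) →+ (Fin m → k) where
  toFun w := fun x => if ee (F x) ≤ μ then coeff (μ - ee (F x)) (w x) else 0
  map_zero' := by funext x; simp
  map_add' a b := by
    funext x
    by_cases h : ee (F x) ≤ μ <;> simp [h, coeff_add]

lemma piM_apply (μ : Fin n →₀ ℕ) (w : Fin m → MvPolynomial (Fin n) k) (x : Fin m) :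
    piM F μ w x = if ee (F x) ≤ μ then coeff (μ - ee (F x)) (w x) else 0 := rfl

lemma piM_smul (μ : Fin n →₀ ℕ) (c : k) (w : Fin m → MvPolynomial (Fin n) k) :
    piM F μ (c • w) = c • piM F μ w := by
  funext x
  by_cases h : ee (F x) ≤ μ <;> simp [piM_apply, h, coeff_smul]


lemma phi_single (u : Fin m → MvPolynomial (Fin n) k) (i : Fin m)
    (p : MvPolynomial (Fin n) k) : phi u (Pi.single i p) = p * u i := by
  have h0 : phi u (Pi.single i p) = ∑ x, (Pi.single i p : Fin m → MvPolynomial (Fin n) k) x * u x := rfl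
  rw [h0, Finset.sum_eq_single i]
  · rw [Pi.single_eq_same]
  · intro x _ hx
    rw [Pi.single_eq_of_ne hx, zero_mul]
  · intro hx
    exact absurd (Finset.mem_univ i) hx

lemma span_linSyz_le_ker (u : Fin m → MvPolynomial (Fin n) k) :
    Submodule.span (MvPolynomial (Fin n) k) (linSyz u) ≤ LinearMap.ker (phi u) := by
  rw [Submodule.span_le]
  rintro z ⟨i, j, a, b, hab, rfl⟩
  rw [SetLike.mem_coe, LinearMap.mem_ker, map_sub, phi_single, phi_single]
  exact sub_eq_zero_of_eq hab

lemma piM_smul_syz (hinj : Function.Injective F) (hcard : ∀ i, (F i).card = d)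
    {μ : Fin n →₀ ℕ} {z : Fin m → MvPolynomial (Fin n) k}
    (hz : z ∈ linSyz (uu (k := k) F)) (r : MvPolynomial (Fin n) k) :
    piM F μ (r • z) ∈ Submodule.span k (egens F d μ.support) := by
  classical
  obtain ⟨a, b, p, q, hpq, rfl⟩ := hz
  by_cases hab : a = b
  · subst hab
    have hu : uu (k := k) F a ≠ 0 := by
      rw [uu_eq]
      exact fun h => one_ne_zero (monomial_eq_zero.mp h)
    have hXX : (X p : MvPolynomial (Fin n) k) = X q := mul_right_cancel₀ hu hpq
    have hpq2 : p = q := X_injective hXX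
    subst hpq2
    rw [sub_self, smul_zero, map_zero]
    exact Submodule.zero_mem _
  obtain ⟨hadj, hpA, hqB, e1, e2⟩ := syz_data hinj hcard hab hpq
  set s0 := ee (F a ∪ F b) with hs0
  set c : k := if s0 ≤ μ then coeff (μ - s0) r else 0 with hc
  have Da : (Pi.single a (X p) - Pi.single b (X q) : Fin m → MvPolynomial (Fin n) k) a = X p := by
    rw [Pi.sub_apply, Pi.single_eq_same, Pi.single_eq_of_ne hab, sub_zero]
  have Db : (Pi.single a (X p) - Pi.single b (X q) : Fin m → MvPolynomial (Fin n) k) b = -X q := by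
    rw [Pi.sub_apply, Pi.single_eq_same, Pi.single_eq_of_ne (Ne.symm hab), zero_sub]
  -- the generic computation for one endpoint of the syzygy
  have main : ∀ (y : Fin m) (t : Fin n), t ∉ F y → Finsupp.single t 1 + ee (F y) = s0 →
      (if ee (F y) ≤ μ then coeff (μ - ee (F y)) (r * X t) else 0) = c := by
    intro y t htA et
    by_cases hU : s0 ≤ μ
    · have hp1 : Finsupp.single t 1 + ee (F y) ≤ μ := by rw [et]; exact hU
      have h1 : ee (F y) ≤ μ := le_trans le_add_self hp1
      have h2 : t ∈ (μ - ee (F y)).support := by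
        rw [Finsupp.mem_support_iff, Finsupp.tsub_apply]
        have h3 := (Finsupp.le_def.mp hp1) t
        rw [Finsupp.add_apply, Finsupp.single_eq_same, ee_apply, if_neg htA] at h3
        rw [ee_apply, if_neg htA]
        omega
      have h3 : μ - ee (F y) - Finsupp.single t 1 = μ - s0 := by
        rw [tsub_tsub, add_comm, et]
      rw [if_pos h1, coeff_mul_X', if_pos h2, h3, hc, if_pos hU]
    · rw [hc, if_neg hU]
      by_cases h1 : ee (F y) ≤ μ
      · have hns : t ∉ (μ - ee (F y)).support := by
          intro h2
          apply hU
          rw [← et]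
          refine Finsupp.le_def.mpr fun l => ?_
          rw [Finsupp.add_apply, Finsupp.single_apply, ee_apply]
          rcases eq_or_ne t l with rfl | hl
          · rw [if_pos rfl, if_neg htA]
            have h4 := Finsupp.mem_support_iff.mp h2
            rw [Finsupp.tsub_apply, ee_apply, if_neg htA] at h4
            omega
          · rw [if_neg hl]
            have h4 := (Finsupp.le_def.mp h1) l
            rw [ee_apply] at h4
            split_ifs at h4 ⊢ <;> omega
        rw [if_pos h1, coeff_mul_X', if_neg hns]
      · rw [if_neg h1]
  have key : piM F μ (r • (Pi.single a (X p) - Pi.single b (X q)))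
      = c • (Pi.single a 1 - Pi.single b 1 : Fin m → k) := by
    funext x
    rw [Pi.smul_apply, Pi.sub_apply, piM_apply, Pi.smul_apply, smul_eq_mul]
    rcases eq_or_ne x a with rfl | hxa
    · rw [Pi.single_eq_same, Pi.single_eq_of_ne hab, sub_zero, smul_eq_mul, mul_one, Da]
      exact main x p hpA e1
    · rcases eq_or_ne x b with rfl | hxb
      · rw [Pi.single_eq_of_ne hxa, Pi.single_eq_same, zero_sub, smul_eq_mul, mul_neg_one, Db,
          mul_neg]
        have hmain := main x q hqB e2
        rw [← hmain]
        by_cases h1 : ee (F x) ≤ μ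
        · rw [if_pos h1, if_pos h1, coeff_neg]
        · rw [if_neg h1, if_neg h1, neg_zero]
      · have hDx : (Pi.single a (X p) - Pi.single b (X q) : Fin m → MvPolynomial (Fin n) k) x
            = 0 := by
          rw [Pi.sub_apply, Pi.single_eq_of_ne hxa, Pi.single_eq_of_ne hxb, sub_zero]
        rw [Pi.single_eq_of_ne hxa, Pi.single_eq_of_ne hxb, sub_zero, smul_zero, hDx, mul_zero]
        split <;> simp
  rw [key]
  by_cases hU : s0 ≤ μ
  · have hsub : F a ∪ F b ⊆ μ.support := ee_le_iff.mp hU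
    refine Submodule.smul_mem _ c (Submodule.subset_span ?_)
    exact ⟨a, b, ⟨hadj, (Finset.union_subset_iff.mp hsub).1, (Finset.union_subset_iff.mp hsub).2⟩,
      rfl⟩
  · rw [hc, if_neg hU, zero_smul]
    exact Submodule.zero_mem _

lemma piM_span (hinj : Function.Injective F) (hcard : ∀ i, (F i).card = d)
    {μ : Fin n →₀ ℕ} {w : Fin m → MvPolynomial (Fin n) k}
    (hw : w ∈ Submodule.span (MvPolynomial (Fin n) k) (linSyz (uu (k := k) F))) :
    piM F μ w ∈ Submodule.span k (egens F d μ.support) := by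
  obtain ⟨cf, hsupp, rfl⟩ := Submodule.mem_span_set.mp hw
  rw [Finsupp.sum, map_sum]
  exact Submodule.sum_mem _ fun z hzin => piM_smul_syz hinj hcard (hsupp hzin) (cf z)


/-- Direction A: linear relations imply pairwise reachability. -/
lemma dirA (hinj : Function.Injective F) (hcard : ∀ i, (F i).card = d)
    (hL : HasLinRel (uu (k := k) F)) (i j : Fin m) :
    (graphAt F d (F i ∪ F j)).Reachable i j := by
  classical
  rcases eq_or_ne i j with rfl | hij
  · exact SimpleGraph.Reachable.refl i
  set μ := ee (F i ∪ F j) with hμ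
  have h1 : ee (F j \ F i) + ee (F i) = μ := by
    rw [hμ, ← ee_union_of_disjoint Finset.sdiff_disjoint, Finset.sdiff_union_self_eq_union,
      Finset.union_comm]
  have h2 : ee (F i \ F j) + ee (F j) = μ := by
    rw [hμ, ← ee_union_of_disjoint Finset.sdiff_disjoint, Finset.sdiff_union_self_eq_union]
  set s : Fin m → MvPolynomial (Fin n) k :=
    Pi.single i (monomial (ee (F j \ F i)) 1) - Pi.single j (monomial (ee (F i \ F j)) 1)
    with hsdef
  have hker : s ∈ LinearMap.ker (phi (uu (k := k) F)) := by
    rw [LinearMap.mem_ker, hsdef, map_sub, phi_single, phi_single, uu_eq, uu_eq,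
      monomial_mul, monomial_mul, mul_one, h1, h2, sub_self]
  rw [← hL] at hker
  have hpi := piM_span (μ := μ) hinj hcard hker
  have hval : piM F μ s = (Pi.single i 1 - Pi.single j 1 : Fin m → k) := by
    funext x
    rw [piM_apply, hsdef, Pi.sub_apply, Pi.sub_apply]
    rcases eq_or_ne x i with rfl | hxi
    · rw [Pi.single_eq_same, Pi.single_eq_of_ne hij, Pi.single_eq_same, Pi.single_eq_of_ne hij,
        sub_zero, sub_zero]
      have hle : ee (F x) ≤ μ := by rw [hμ]; exact ee_mono Finset.subset_union_left
      have heq : μ - ee (F x) = ee (F j \ F x) := by rw [← h1, add_tsub_cancel_right]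
      rw [if_pos hle, heq, coeff_monomial, if_pos rfl]
    · rcases eq_or_ne x j with rfl | hxj
      · rw [Pi.single_eq_of_ne hxi, Pi.single_eq_same, Pi.single_eq_of_ne hxi, Pi.single_eq_same,
          zero_sub, zero_sub]
        have hle : ee (F x) ≤ μ := by rw [hμ]; exact ee_mono Finset.subset_union_right
        have heq : μ - ee (F x) = ee (F i \ F x) := by rw [← h2, add_tsub_cancel_right]
        rw [if_pos hle, coeff_neg, heq, coeff_monomial, if_pos rfl]
      · rw [Pi.single_eq_of_ne hxi, Pi.single_eq_of_ne hxj, Pi.single_eq_of_ne hxi,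
          Pi.single_eq_of_ne hxj, sub_zero, sub_zero]
        split <;> simp
  rw [hval] at hpi
  have hreach := reach_of_mem_span hpi
  have hsupp : μ.support = F i ∪ F j := by rw [hμ, ee_support]
  rwa [hsupp] at hreach

lemma piM_sum_eq (μ : Fin n →₀ ℕ) (w : Fin m → MvPolynomial (Fin n) k)
    (hw : w ∈ LinearMap.ker (phi (uu (k := k) F))) : ∑ x, piM F μ w x = 0 := by
  have h0 : phi (uu (k := k) F) w = ∑ x, w x * uu (k := k) F x := rfl
  have h1 : coeff μ (phi (uu (k := k) F) w) = 0 := by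
    rw [LinearMap.mem_ker.mp hw, coeff_zero]
  rw [h0, coeff_sum] at h1
  rw [← h1]
  refine Finset.sum_congr rfl fun x _ => ?_
  rw [piM_apply, uu_eq, coeff_mul_monomial']
  split_ifs with h
  · rw [mul_one]
  · rfl

/-- Lift of an edge: an element of the span of linear syzygies concentrated in degree `μ`. -/
lemma lift_adj (hcard : ∀ i, (F i).card = d) {μ : Fin n →₀ ℕ} {a b : Fin m}
    (h : (graphAt F d μ.support).Adj a b) :
    ∃ W : Fin m → MvPolynomial (Fin n) k,
      W ∈ Submodule.span (MvPolynomial (Fin n) k) (linSyz (uu (k := k) F)) ∧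
      (∀ x, ¬ ee (F x) ≤ μ → W x = 0) ∧
      (∀ x, (W x).support ⊆ {μ - ee (F x)}) ∧
      piM F μ W = (Pi.single a 1 - Pi.single b 1 : Fin m → k) := by
  classical
  obtain ⟨p, q, hpq, hpA, hqB, e1, e2⟩ := adj_syz (k := k) hcard h.1
  have hab : a ≠ b := h.1.1
  have haμ : ee (F a) ≤ μ := by rw [ee_le_iff]; exact h.2.1
  have hbμ : ee (F b) ≤ μ := by rw [ee_le_iff]; exact h.2.2
  have hUμ : ee (F a ∪ F b) ≤ μ := by
    rw [ee_le_iff]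
    exact Finset.union_subset h.2.1 h.2.2
  set s0 := ee (F a ∪ F b) with hs0
  set W : Fin m → MvPolynomial (Fin n) k :=
    (monomial (μ - s0) (1 : k) : MvPolynomial (Fin n) k) •
      (Pi.single a (X p) - Pi.single b (X q)) with hW
  have harith : ∀ (y : Fin m) (t : Fin n), Finsupp.single t 1 + ee (F y) = s0 →
      (μ - s0) + Finsupp.single t 1 = μ - ee (F y) := by
    intro y t et
    have hle : Finsupp.single t 1 ≤ μ - ee (F y) := by
      refine le_tsub_of_add_le_left ?_
      rw [add_comm, et]
      exact hUμ
    have h3 : μ - s0 = μ - ee (F y) - Finsupp.single t 1 := by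
      rw [tsub_tsub, add_comm, et]
    rw [h3, tsub_add_cancel_of_le hle]
  have hWa : W a = monomial (μ - ee (F a)) 1 := by
    rw [hW, Pi.smul_apply, Pi.sub_apply, Pi.single_eq_same, Pi.single_eq_of_ne hab, sub_zero,
      smul_eq_mul, X, monomial_mul, mul_one, harith a p e1]
  have hWb : W b = -monomial (μ - ee (F b)) 1 := by
    rw [hW, Pi.smul_apply, Pi.sub_apply, Pi.single_eq_same, Pi.single_eq_of_ne (Ne.symm hab),
      zero_sub, smul_eq_mul, mul_neg, X, monomial_mul, mul_one, harith b q e2]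
  have hWx : ∀ x, x ≠ a → x ≠ b → W x = 0 := by
    intro x hxa hxb
    rw [hW, Pi.smul_apply, Pi.sub_apply, Pi.single_eq_of_ne hxa, Pi.single_eq_of_ne hxb,
      sub_zero, smul_zero]
  refine ⟨W, ?_, ?_, ?_, ?_⟩
  · exact Submodule.smul_mem _ _ (Submodule.subset_span ⟨a, b, p, q, hpq, rfl⟩)
  · intro x hx
    rcases eq_or_ne x a with rfl | hxa
    · exact absurd haμ hx
    rcases eq_or_ne x b with rfl | hxb
    · exact absurd hbμ hx
    exact hWx x hxa hxb
  · intro x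
    rcases eq_or_ne x a with rfl | hxa
    · rw [hWa]
      exact support_monomial_subset
    rcases eq_or_ne x b with rfl | hxb
    · rw [hWb, support_neg]
      exact support_monomial_subset
    · rw [hWx x hxa hxb]
      simp
  · funext x
    rw [piM_apply]
    rcases eq_or_ne x a with rfl | hxa
    · rw [Pi.sub_apply, Pi.single_eq_same, Pi.single_eq_of_ne hab, sub_zero, if_pos haμ, hWa,
        coeff_monomial, if_pos rfl]
    rcases eq_or_ne x b with rfl | hxb
    · rw [Pi.sub_apply, Pi.single_eq_of_ne hxa, Pi.single_eq_same, zero_sub, if_pos hbμ, hWb,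
        coeff_neg, coeff_monomial, if_pos rfl]
    · rw [Pi.sub_apply, Pi.single_eq_of_ne hxa, Pi.single_eq_of_ne hxb, sub_zero,
        hWx x hxa hxb]
      split <;> simp

lemma lift_reach (hcard : ∀ i, (F i).card = d) {μ : Fin n →₀ ℕ} {a b : Fin m}
    (h : (graphAt F d μ.support).Reachable a b) :
    ∃ W : Fin m → MvPolynomial (Fin n) k,
      W ∈ Submodule.span (MvPolynomial (Fin n) k) (linSyz (uu (k := k) F)) ∧
      (∀ x, ¬ ee (F x) ≤ μ → W x = 0) ∧
      (∀ x, (W x).support ⊆ {μ - ee (F x)}) ∧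
      piM F μ W = (Pi.single a 1 - Pi.single b 1 : Fin m → k) := by
  classical
  obtain ⟨wk⟩ := h
  induction wk with
  | nil =>
    refine ⟨0, Submodule.zero_mem _, fun x _ => rfl, fun x => by simp, ?_⟩
    rw [map_zero, sub_self]
  | cons hadj pth ih =>
    rename_i x y z
    obtain ⟨W1, hW1s, hW1z, hW1supp, hW1pi⟩ := lift_adj (k := k) hcard hadj
    obtain ⟨W2, hW2s, hW2z, hW2supp, hW2pi⟩ := ih
    refine ⟨W1 + W2, Submodule.add_mem _ hW1s hW2s, ?_, ?_, ?_⟩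
    · intro t ht
      rw [Pi.add_apply, hW1z t ht, hW2z t ht, add_zero]
    · intro t
      rw [Pi.add_apply]
      exact (support_add).trans (Finset.union_subset (hW1supp t) (hW2supp t))
    · rw [map_add, hW1pi, hW2pi, sub_add_sub_cancel]

lemma lift_lambda (hcard : ∀ i, (F i).card = d) {μ : Fin n →₀ ℕ} (lam : Fin m → k)
    (hsum : ∑ x, lam x = 0) (hl : ∀ x, lam x ≠ 0 → ee (F x) ≤ μ) (a0 : Fin m)
    (hreach : ∀ x, ee (F x) ≤ μ → (graphAt F d μ.support).Reachable x a0) :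
    ∃ Z : Fin m → MvPolynomial (Fin n) k,
      Z ∈ Submodule.span (MvPolynomial (Fin n) k) (linSyz (uu (k := k) F)) ∧
      (∀ x, ¬ ee (F x) ≤ μ → Z x = 0) ∧
      (∀ x, (Z x).support ⊆ {μ - ee (F x)}) ∧
      piM F μ Z = lam := by
  classical
  have hWex : ∀ y : Fin m, ∃ W : Fin m → MvPolynomial (Fin n) k,
      W ∈ Submodule.span (MvPolynomial (Fin n) k) (linSyz (uu (k := k) F)) ∧
      (∀ x, ¬ ee (F x) ≤ μ → W x = 0) ∧
      (∀ x, (W x).support ⊆ {μ - ee (F x)}) ∧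
      (lam y ≠ 0 → piM F μ W = (Pi.single y 1 - Pi.single a0 1 : Fin m → k)) ∧
      (lam y = 0 → W = 0) := by
    intro y
    by_cases hy : lam y = 0
    · exact ⟨0, Submodule.zero_mem _, fun x _ => rfl, fun x => by simp,
        fun h => absurd hy h, fun _ => rfl⟩
    · obtain ⟨W, h1, h2, h3, h4⟩ := lift_reach (k := k) hcard (hreach y (hl y hy))
      exact ⟨W, h1, h2, h3, fun _ => h4, fun h => absurd h hy⟩
  choose W hWs hWz hWsupp hWpi hW0 using hWex
  refine ⟨∑ y, lam y • W y, ?_, ?_, ?_, ?_⟩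
  · exact Submodule.sum_mem _ fun y _ => Submodule.smul_of_tower_mem _ (lam y) (hWs y)
  · intro x hx
    rw [Finset.sum_apply]
    refine Finset.sum_eq_zero fun y _ => ?_
    rw [Pi.smul_apply, hWz y x hx, smul_zero]
  · intro x
    rw [Finset.sum_apply]
    refine (MvPolynomial.support_sum).trans (Finset.biUnion_subset.mpr fun y _ => ?_)
    exact (support_smul).trans (hWsupp y x)
  · rw [map_sum]
    have hcongr : ∀ y ∈ Finset.univ, piM F μ (lam y • W y)
        = lam y • (Pi.single y 1 - Pi.single a0 1 : Fin m → k) := by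
      intro y _
      by_cases hy : lam y = 0
      · rw [hy, zero_smul, zero_smul, map_zero]
      · rw [piM_smul, hWpi y hy]
    rw [Finset.sum_congr rfl hcongr]
    simp_rw [smul_sub]
    rw [Finset.sum_sub_distrib, ← Finset.sum_smul, hsum, zero_smul, sub_zero]
    funext t
    rw [Finset.sum_apply]
    simp [Pi.single_apply, mul_ite, Finset.sum_ite_eq]

/-- Direction B: connectivity implies the kernel is spanned by linear syzygies. -/
lemma ker_le_span (hinj : Function.Injective F) (hcard : ∀ i, (F i).card = d)
    (hC : ∀ i j : Fin m,
      ((syzGraph F d).induce {w : Fin m | F w ⊆ F i ∪ F j}).Connected) :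
    ∀ N : ℕ, ∀ w : Fin m → MvPolynomial (Fin n) k,
      w ∈ LinearMap.ker (phi (uu (k := k) F)) → (∑ x, (w x).support.card) ≤ N →
      w ∈ Submodule.span (MvPolynomial (Fin n) k) (linSyz (uu (k := k) F)) := by
  classical
  intro N
  induction N with
  | zero =>
    intro w hw hN
    have hw0 : w = 0 := by
      funext x
      have h1 : (w x).support.card ≤ 0 :=
        le_trans (Finset.single_le_sum (f := fun x => (w x).support.card) (fun _ _ => Nat.zero_le _) (Finset.mem_univ x)) hN
      have h2 : (w x).support = ∅ := Finset.card_eq_zero.mp (Nat.le_zero.mp h1)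
      exact support_eq_empty.mp h2
    rw [hw0]
    exact Submodule.zero_mem _
  | succ N ih =>
    intro w hw hN
    by_cases hw0 : w = 0
    · rw [hw0]; exact Submodule.zero_mem _
    have hex : ∃ i : Fin m, w i ≠ 0 := by
      by_contra h
      push_neg at h
      exact hw0 (funext fun x => h x)
    obtain ⟨i, hi⟩ := hex
    have hns : (w i).support.Nonempty :=
      Finset.nonempty_of_ne_empty fun h => hi (support_eq_empty.mp h)
    obtain ⟨ν, hν⟩ := hns
    set μ := ν + ee (F i) with hμ
    have hiμ : ee (F i) ≤ μ := le_add_self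
    have hsum : ∑ x, piM F μ w x = 0 := piM_sum_eq μ w hw
    have hreach : ∀ x, ee (F x) ≤ μ → (graphAt F d μ.support).Reachable x i := fun x hx =>
      reach_of_conn hC (ee_le_iff.mp hx) (ee_le_iff.mp hiμ)
    have hl : ∀ x, piM F μ w x ≠ 0 → ee (F x) ≤ μ := by
      intro x hx
      by_contra hle
      exact hx (by rw [piM_apply, if_neg hle])
    obtain ⟨Z, hZs, hZz, hZsupp, hZpi⟩ := lift_lambda hcard (piM F μ w) hsum hl i hreach
    have hwZ : w - Z ∈ LinearMap.ker (phi (uu (k := k) F)) :=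
      Submodule.sub_mem _ hw (span_linSyz_le_ker _ hZs)
    have hpi0 : piM F μ (w - Z) = 0 := by rw [map_sub, hZpi, sub_self]
    have hcoeff0 : ∀ x, ee (F x) ≤ μ → coeff (μ - ee (F x)) ((w - Z) x) = 0 := by
      intro x hx
      have := congrFun hpi0 x
      rwa [piM_apply, if_pos hx, Pi.zero_apply] at this
    have hsupp_le : ∀ x, ((w - Z) x).support ⊆ (w x).support := by
      intro x
      by_cases hx : ee (F x) ≤ μ
      · intro ρ hρ
        rcases Finset.mem_union.mp (support_sub _ (w x) (Z x) hρ) with h | h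
        · exact h
        · have hρeq : ρ = μ - ee (F x) := Finset.mem_singleton.mp (hZsupp x h)
          exact absurd ((mem_support_iff.mp (hρeq ▸ hρ)) (hcoeff0 x hx)) id
      · have heq : (w - Z) x = w x := by rw [Pi.sub_apply, hZz x hx, sub_zero]
        rw [heq]
    have hstrict : ((w - Z) i).support.card < (w i).support.card := by
      have hν_not : ν ∉ ((w - Z) i).support := by
        intro hmem
        have hνeq : μ - ee (F i) = ν := by rw [hμ, add_tsub_cancel_right]
        exact mem_support_iff.mp hmem (by rw [← hνeq]; exact hcoeff0 i hiμ)
      calc ((w - Z) i).support.card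
          ≤ ((w i).support.erase ν).card := Finset.card_le_card (fun t ht =>
            Finset.mem_erase.mpr ⟨fun h => hν_not (h ▸ ht), hsupp_le i ht⟩)
        _ < (w i).support.card := Finset.card_erase_lt_of_mem hν
    have hsum_lt : ∑ x, ((w - Z) x).support.card ≤ N := by
      have h1 : ∑ x, ((w - Z) x).support.card < ∑ x, (w x).support.card :=
        Finset.sum_lt_sum (fun x _ => Finset.card_le_card (hsupp_le x))
          ⟨i, Finset.mem_univ i, hstrict⟩
      omega
    have hmem := ih (w - Z) hwZ hsum_lt
    have hdecomp : w = (w - Z) + Z := (sub_add_cancel w Z).symm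
    rw [hdecomp]
    exact Submodule.add_mem _ hmem hZs

end Field

end Stmt2Aux

/-- `I` has linear relations iff for all generators `u i, u j` the induced
subgraph `G_I^{(u i, u j)}` (on the generators whose support is contained in
`F i ∪ F j`) is connected. -/
theorem stmt2 {k : Type*} [Field k] {n m d : ℕ}
    (F : Fin m → Finset (Fin n)) (hinj : Function.Injective F)
    (hcard : ∀ i, (F i).card = d) :
    HasLinRel (fun i : Fin m => ∏ l ∈ F i, (X l : MvPolynomial (Fin n) k)) ↔
      ∀ i j : Fin m,
        ((syzGraph F d).induce {w : Fin m | F w ⊆ F i ∪ F j}).Connected := by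
  constructor
  · intro hL
    exact Stmt2Aux.conn_of_P (fun a b => Stmt2Aux.dirA hinj hcard hL a b)
  · intro hC
    show Submodule.span (MvPolynomial (Fin n) k)
        (linSyz (fun i : Fin m => ∏ l ∈ F i, (X l : MvPolynomial (Fin n) k)))
      = LinearMap.ker (phi (fun i : Fin m => ∏ l ∈ F i, (X l : MvPolynomial (Fin n) k)))
    apply le_antisymm
    · exact Stmt2Aux.span_linSyz_le_ker _
    · intro w hw
      exact Stmt2Aux.ker_le_span hinj hcard hC (∑ x, (w x).support.card) w hw le_rfl
end

section
/- Assume that every variable x_i divides at least one but not all of the minimal generators of I, and that the syzygy graph G_I is isomorphic to the cycle C_m with m ≥ 4. If d + 2 < n or m ≠ n, then I does not have linear quotients. -/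
open MvPolynomial Finset

attribute [local instance] Classical.propDecidable

/- ===== auxiliary lemmas ===== -/

-- indicator finsupp
noncomputable def ind {n : ℕ} (s : Finset (Fin n)) : Fin n →₀ ℕ := ∑ l ∈ s, Finsupp.single l 1

lemma ind_apply {n : ℕ} (s : Finset (Fin n)) (a : Fin n) :
    ind s a = if a ∈ s then 1 else 0 := by
  classical
  unfold ind
  rw [Finsupp.finset_sum_apply]
  simp [Finsupp.single_apply, Finset.sum_ite_eq]

lemma prod_X_eq {k : Type*} [Field k] {n : ℕ} (s : Finset (Fin n)) :
    (∏ l ∈ s, (X l : MvPolynomial (Fin n) k)) = monomial (ind s) 1 := by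
  classical
  induction s using Finset.cons_induction with
  | empty => simp [ind]
  | cons a s ha ih =>
      rw [Finset.prod_cons, ih]
      unfold ind
      rw [Finset.sum_cons]
      rw [X, monomial_mul, mul_one]


lemma ind_union {n : ℕ} {s t : Finset (Fin n)} (h : Disjoint s t) :
    ind (s ∪ t) = ind s + ind t := by
  unfold ind
  rw [Finset.sum_union h]

open Fin.CommRing in
lemma fin_cast_ne {m : ℕ} [NeZero m] (c : ℕ) (hc : c < m) (hc0 : c ≠ 0) :
    ((c : ℕ) : Fin m) ≠ 0 := by
  intro h
  have := congrArg Fin.val h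
  rw [Fin.val_natCast, Nat.mod_eq_of_lt hc] at this
  simp at this
  exact hc0 this

open Fin.CommRing in
lemma fin_facts {m : ℕ} [NeZero m] (hm : 4 ≤ m) :
    (1 : Fin m) ≠ 0 ∧ (2 : Fin m) ≠ 0 ∧ (3 : Fin m) ≠ 0 := by
  refine ⟨?_, ?_, ?_⟩
  · have := fin_cast_ne (m := m) 1 (by omega) (by omega)
    rwa [Nat.cast_one] at this
  · have := fin_cast_ne (m := m) 2 (by omega) (by omega)
    rwa [Nat.cast_ofNat] at this
  · have := fin_cast_ne (m := m) 3 (by omega) (by omega)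
    rwa [Nat.cast_ofNat] at this

open Fin.CommRing in
lemma count_lemma {m : ℕ} [NeZero m] (hm : 4 ≤ m) (σ : Equiv.Perm (Fin m))
    (C : ∀ t : Fin m, t.val ≠ 0 → ∃ j' : Fin m, j' < t ∧ (σ j' = σ t + 1 ∨ σ j' = σ t - 1))
    (t₀ : Fin m) (h1 : t₀.val ≠ 0) (h2 : t₀.val ≠ m - 1)
    (hb1 : σ.symm (σ t₀ + 1) < t₀) (hb2 : σ.symm (σ t₀ - 1) < t₀) : False := by
  classical
  have hone : (1 : Fin m) ≠ 0 := (fin_facts hm).1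
  set τ := σ.symm with hτ
  set f : Fin m → Fin m := fun i => max (τ i) (τ (i + 1)) with hf
  set tl : Fin m := ⟨m - 1, by omega⟩ with htl
  have hle_tl : ∀ i : Fin m, i ≤ tl := fun i => by
    rw [Fin.le_def]; have := i.isLt; simp [htl]; omega
  have hsum : ∑ t : Fin m, (univ.filter (fun i => f i = t)).card = m := by
    rw [← Finset.card_eq_sum_card_fiberwise (fun i _ => Finset.mem_univ (f i))]
    simp
  have hτσ : ∀ x, τ (σ x) = x := fun x => σ.symm_apply_apply x
  have hsub1 : ∀ x : Fin m, x + 1 - 1 = x := fun x => by ring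
  have hsub2 : ∀ x : Fin m, x - 1 + 1 = x := fun x => by ring
  have hxne : ∀ x : Fin m, x - 1 ≠ x := by
    intro x h
    apply hone
    have h' := hsub2 x
    rw [h] at h'
    have h'' : x + 1 = x + 0 := by rw [add_zero]; exact h'
    exact add_left_cancel h'' 
  -- fiber membership criteria
  have mem_fib : ∀ i t : Fin m, f i = t ↔ max (τ i) (τ (i+1)) = t := fun _ _ => Iff.rfl
  -- lower bound function
  set L : Fin m → ℕ := fun t =>
    (if t = t₀ then 1 else 0) + (if t = tl then 1 else 0) + (if t.val = 0 then 0 else 1) with hL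
  have ht0tl : t₀ ≠ tl := fun h => h2 (by rw [h])
  have hLsum : ∑ t : Fin m, L t = m + 1 := by
    rw [hL]
    rw [Finset.sum_add_distrib, Finset.sum_add_distrib]
    rw [Finset.sum_ite_eq' univ t₀ (fun _ => 1), Finset.sum_ite_eq' univ tl (fun _ => 1)]
    simp only [mem_univ, if_pos]
    have : ∑ t : Fin m, (if t.val = 0 then 0 else 1) = m - 1 := by
      rw [Finset.sum_ite, Finset.sum_const, Finset.sum_const]
      have h0 : (univ.filter (fun t : Fin m => t.val = 0)) = {(0 : Fin m)} := by
        ext x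
        simp [Fin.val_eq_zero_iff]
      have hc : (univ.filter (fun t : Fin m => ¬ t.val = 0)).card = m - 1 := by
        have := Finset.card_filter_add_card_filter_not
          (s := (univ : Finset (Fin m))) (p := fun t : Fin m => t.val = 0)
        rw [h0] at this
        simp at this ⊢
        omega
      rw [hc]
      simp
    rw [this]
    have : 0 < m := by omega
    omega
  -- pointwise bound
  have hpt : ∀ t : Fin m, L t ≤ (univ.filter (fun i => f i = t)).card := by
    intro t
    by_cases htt0 : t = t₀
    · subst htt0
      have hLt : L t = 2 := by
        simp only [hL]
        rw [if_neg ht0tl, if_neg h1]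
        simp
      rw [hLt]
      have hmem1 : σ t ∈ univ.filter (fun i => f i = t) := by
        simp only [Finset.mem_filter, Finset.mem_univ, true_and, hf]
        rw [hτσ]
        exact max_eq_left (le_of_lt hb1)
      have hmem2 : σ t - 1 ∈ univ.filter (fun i => f i = t) := by
        simp only [Finset.mem_filter, Finset.mem_univ, true_and, hf]
        rw [hsub2, hτσ]
        exact max_eq_right (le_of_lt hb2)
      have : ({σ t - 1, σ t} : Finset (Fin m)) ⊆ univ.filter (fun i => f i = t) := by
        intro x hx
        rcases Finset.mem_insert.mp hx with h | h
        · subst h; exact hmem2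
        · rw [Finset.mem_singleton] at h; subst h; exact hmem1
      calc 2 = ({σ t - 1, σ t} : Finset (Fin m)).card := by
              rw [Finset.card_insert_of_notMem (by simp [hxne])]; simp
        _ ≤ _ := Finset.card_le_card this
    · by_cases httl : t = tl
      · subst httl
        have hLt : L tl = 2 := by
          simp only [hL]
          rw [if_neg (show tl ≠ t₀ from Ne.symm ht0tl),
            if_neg (show ¬ ((tl : Fin m).val = 0) by simp [htl]; omega)]
          simp
        rw [hLt]
        have hmem1 : σ tl ∈ univ.filter (fun i => f i = tl) := by
          simp only [Finset.mem_filter, Finset.mem_univ, true_and, hf]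
          rw [hτσ]
          exact max_eq_left (hle_tl _)
        have hmem2 : σ tl - 1 ∈ univ.filter (fun i => f i = tl) := by
          simp only [Finset.mem_filter, Finset.mem_univ, true_and, hf]
          rw [hsub2, hτσ]
          exact max_eq_right (hle_tl _)
        have : ({σ tl - 1, σ tl} : Finset (Fin m)) ⊆ univ.filter (fun i => f i = tl) := by
          intro x hx
          rcases Finset.mem_insert.mp hx with h | h
          · subst h; exact hmem2
          · rw [Finset.mem_singleton] at h; subst h; exact hmem1
        calc 2 = ({σ tl - 1, σ tl} : Finset (Fin m)).card := by
                rw [Finset.card_insert_of_notMem (by simp [hxne])]; simp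
          _ ≤ _ := Finset.card_le_card this
      · by_cases ht00 : t.val = 0
        · have : L t = 0 := by
            simp only [hL]
            rw [if_neg htt0, if_neg httl, if_pos ht00]
          omega
        · have hLt : L t = 1 := by
            simp only [hL]
            rw [if_neg htt0, if_neg httl, if_neg ht00]
          rw [hLt]
          rw [Nat.one_le_iff_ne_zero, ← Nat.pos_iff_ne_zero, Finset.card_pos]
          obtain ⟨j', hj', hor⟩ := C t ht00
          rcases hor with h | h
          · refine ⟨σ t, ?_⟩
            simp only [Finset.mem_filter, Finset.mem_univ, true_and, hf]
            rw [hτσ, ← h, hτσ]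
            exact max_eq_left (le_of_lt hj')
          · refine ⟨σ t - 1, ?_⟩
            simp only [Finset.mem_filter, Finset.mem_univ, true_and, hf]
            rw [hsub2, hτσ, ← h, hτσ]
            exact max_eq_right (le_of_lt hj')
  have : (m : ℕ) + 1 ≤ m := by
    calc m + 1 = ∑ t : Fin m, L t := hLsum.symm
      _ ≤ ∑ t : Fin m, (univ.filter (fun i => f i = t)).card := Finset.sum_le_sum (fun t _ => hpt t)
      _ = m := hsum
  omega

lemma step_cond {k : Type*} [Field k] {n m d : ℕ} (F : Fin m → Finset (Fin n))
    (hinj : Function.Injective F) (hcard : ∀ i, (F i).card = d)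
    (σ : Equiv.Perm (Fin m))
    (hσ : ∀ i : Fin m, i.val ≠ 0 →
      ∃ T : Set (Fin n),
        Submodule.colon (Ideal.span ((fun j => (∏ l ∈ F (σ j), (X l : MvPolynomial (Fin n) k))) '' {j : Fin m | j < i}))
          (Ideal.span {∏ l ∈ F (σ i), (X l : MvPolynomial (Fin n) k)}) = Ideal.span (X '' T))
    (t : Fin m) (ht : t.val ≠ 0) (j : Fin m) (hj : j < t) :
    ∃ j' : Fin m, j' < t ∧ (F (σ j') \ F (σ t)).card = 1 ∧
      F (σ j') \ F (σ t) ⊆ F (σ j) \ F (σ t) := by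
  classical
  obtain ⟨T, hT⟩ := hσ t ht
  -- rewrite the generating set as a monomial image
  have himg : ((fun j => (∏ l ∈ F (σ j), (X l : MvPolynomial (Fin n) k))) '' {j : Fin m | j < t})
      = ((fun s => monomial s (1 : k)) '' ((fun j : Fin m => ind (F (σ j))) '' {j : Fin m | j < t})) := by
    rw [Set.image_image]
    apply Set.image_congr
    intro x _
    exact prod_X_eq _
  -- Step A : w ∈ colon
  set I : Ideal (MvPolynomial (Fin n) k) :=
    Ideal.span ((fun j => (∏ l ∈ F (σ j), (X l : MvPolynomial (Fin n) k))) '' {j : Fin m | j < t}) with hI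
  have hwmem : (monomial (ind (F (σ j) \ F (σ t))) (1 : k)) ∈
      Submodule.colon I (Ideal.span {∏ l ∈ F (σ t), (X l : MvPolynomial (Fin n) k)}) := by
    rw [Ideal.mem_colon_span_singleton]
    have h1 : (monomial (ind (F (σ j) \ F (σ t))) (1 : k)) * (∏ l ∈ F (σ t), (X l : MvPolynomial (Fin n) k))
        = (monomial (ind (F (σ t) \ F (σ j))) (1 : k)) * (∏ l ∈ F (σ j), (X l : MvPolynomial (Fin n) k)) := by
      rw [prod_X_eq, prod_X_eq, monomial_mul, monomial_mul, ← ind_union (Finset.sdiff_disjoint),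
        ← ind_union (Finset.sdiff_disjoint), Finset.sdiff_union_self_eq_union,
        Finset.sdiff_union_self_eq_union, Finset.union_comm, mul_one]
    rw [h1]
    exact Ideal.mul_mem_left _ _ (Ideal.subset_span ⟨j, hj, rfl⟩)
  rw [hT] at hwmem
  -- Step B : extract a variable a ∈ T dividing w
  rw [mem_ideal_span_X_image] at hwmem
  have hsupp : (ind (F (σ j) \ F (σ t))) ∈ (monomial (ind (F (σ j) \ F (σ t))) (1 : k)).support := by
    rw [support_monomial, if_neg (one_ne_zero)]
    exact Finset.mem_singleton_self _
  obtain ⟨a, haT, ha⟩ := hwmem _ hsupp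
  have haj : a ∈ F (σ j) \ F (σ t) := by
    rw [ind_apply] at ha
    by_contra hc
    rw [if_neg hc] at ha
    exact ha rfl
  -- Step C : X a ∈ colon, so X a * u t ∈ I
  have hXa : (X a : MvPolynomial (Fin n) k) ∈
      Submodule.colon I (Ideal.span {∏ l ∈ F (σ t), (X l : MvPolynomial (Fin n) k)}) := by
    rw [hT]
    exact Ideal.subset_span ⟨a, haT, rfl⟩
  rw [Ideal.mem_colon_span_singleton] at hXa
  rw [hI, himg] at hXa
  have h2 : (X a : MvPolynomial (Fin n) k) * (∏ l ∈ F (σ t), X l)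
      = monomial (Finsupp.single a 1 + ind (F (σ t))) (1 : k) := by
    rw [prod_X_eq, X, monomial_mul, mul_one]
  rw [h2] at hXa
  rw [mem_ideal_span_monomial_image] at hXa
  have hsupp2 : (Finsupp.single a 1 + ind (F (σ t))) ∈
      (monomial (Finsupp.single a 1 + ind (F (σ t))) (1 : k)).support := by
    rw [support_monomial, if_neg (one_ne_zero)]
    exact Finset.mem_singleton_self _
  obtain ⟨si, hsi, hle⟩ := hXa _ hsupp2
  obtain ⟨j', hj', rfl⟩ := hsi
  refine ⟨j', hj', ?_⟩
  -- Step D : conclude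
  have hat : a ∉ F (σ t) := (Finset.mem_sdiff.mp haj).2
  have hsub : F (σ j') ⊆ insert a (F (σ t)) := by
    intro b hb
    have := hle b
    rw [ind_apply, if_pos hb, Finsupp.add_apply, Finsupp.single_apply, ind_apply] at this
    by_contra hbc
    rw [Finset.mem_insert] at hbc
    push_neg at hbc
    rw [if_neg (fun h => hbc.1 h.symm), if_neg hbc.2] at this
    omega
  have hne : F (σ j') ≠ F (σ t) := fun h => by
    have := hinj h
    have := σ.injective this
    exact absurd this (ne_of_lt hj')
  have hsd : F (σ j') \ F (σ t) = {a} := by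
    have hss : F (σ j') \ F (σ t) ⊆ {a} := by
      intro b hb
      rw [Finset.mem_sdiff] at hb
      rcases Finset.mem_insert.mp (hsub hb.1) with h | h
      · exact Finset.mem_singleton.mpr h
      · exact absurd h hb.2
    rcases Finset.subset_singleton_iff.mp hss with h | h
    · exfalso
      have : F (σ j') ⊆ F (σ t) := by
        intro b hb
        by_contra hbc
        have : b ∈ F (σ j') \ F (σ t) := Finset.mem_sdiff.mpr ⟨hb, hbc⟩
        rw [h] at this
        exact absurd this (Finset.notMem_empty b)
      exact hne (Finset.eq_of_subset_of_card_le this (by rw [hcard, hcard]))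
    · exact h
  rw [hsd]
  refine ⟨rfl, ?_⟩
  intro b hb
  rw [Finset.mem_singleton] at hb
  subst hb
  exact haj

lemma m_le_d_add_two {n m d : ℕ} [NeZero m] (hm : 4 ≤ m) (hn0 : 0 < n)
    (F : Fin m → Finset (Fin n)) (hcard : ∀ i, (F i).card = d)
    (hcyc' : ∀ i j : Fin m, i ≠ j → (((F i ∩ F j).card + 1 = d) ↔ (j = i + 1 ∨ i = j + 1)))
    (σ : Equiv.Perm (Fin m))
    (SC : ∀ t : Fin m, t.val ≠ 0 → ∀ j, j < t → ∃ j', j' < t ∧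
      (F (σ j') \ F (σ t)).card = 1 ∧ F (σ j') \ F (σ t) ⊆ F (σ j) \ F (σ t)) :
    m ≤ d + 2 := by
  classical
  set z0 : Fin m := ⟨0, by omega⟩ with hz0
  set z1 : Fin m := ⟨1, by omega⟩ with hz1
  -- neighbor form of the step condition
  have nbr : ∀ t : Fin m, t.val ≠ 0 → ∀ j, j < t → ∃ j', j' < t ∧
      (σ j' = σ t + 1 ∨ σ j' = σ t - 1) ∧ (F (σ j') \ F (σ t)).card = 1 ∧
      F (σ j') \ F (σ t) ⊆ F (σ j) \ F (σ t) := by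
    intro t ht j hj
    obtain ⟨j', hj', hc1, hsub⟩ := SC t ht j hj
    have hne : σ j' ≠ σ t := fun h => absurd (σ.injective h) (ne_of_lt hj')
    have hint : (F (σ j') ∩ F (σ t)).card + 1 = d := by
      have h2 := Finset.card_sdiff_add_card_inter (F (σ j')) (F (σ t))
      rw [hc1, hcard] at h2
      omega
    have hadj := (hcyc' _ _ hne).mp hint
    refine ⟨j', hj', ?_, hc1, hsub⟩
    rcases hadj with h | h
    · right; rw [h]; exact (add_sub_cancel_right _ _).symm
    · left; exact h
  have C : ∀ t : Fin m, t.val ≠ 0 → ∃ j' : Fin m, j' < t ∧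
      (σ j' = σ t + 1 ∨ σ j' = σ t - 1) := by
    intro t ht
    have hz0t : z0 < t := by rw [Fin.lt_def]; simp only [hz0]; omega
    obtain ⟨j', h1, h2, _, _⟩ := nbr t ht z0 hz0t
    exact ⟨j', h1, h2⟩
  have notboth : ∀ t : Fin m, t.val ≠ 0 → t.val ≠ m - 1 →
      ¬(σ.symm (σ t + 1) < t ∧ σ.symm (σ t - 1) < t) := by
    intro t h1 h2 hb
    exact count_lemma hm σ C t h1 h2 hb.1 hb.2
  -- existence of the common element
  have key : ∀ t : Fin m, t.val ≠ 0 → t.val ≠ m - 1 →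
      ∃ x : Fin n, x ∉ F (σ t) ∧ ∀ j, j < t → x ∈ F (σ j) := by
    intro t ht htl
    have hz0t : z0 < t := by rw [Fin.lt_def]; simp only [hz0]; omega
    obtain ⟨j0, hj0, hor0, hc0, _⟩ := nbr t ht z0 hz0t
    obtain ⟨a, ha⟩ := Finset.card_eq_one.mp hc0
    have hamem : a ∈ F (σ j0) \ F (σ t) := by rw [ha]; exact Finset.mem_singleton_self a
    refine ⟨a, (Finset.mem_sdiff.mp hamem).2, ?_⟩
    intro j hj
    obtain ⟨j', hj', hor, hc1, hsub⟩ := nbr t ht j hj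
    have hjj : j' = j0 := by
      rcases hor with h | h <;> rcases hor0 with h0 | h0
      · exact σ.injective (h.trans h0.symm)
      · exfalso
        apply notboth t ht htl
        constructor
        · rw [← h, Equiv.symm_apply_apply]; exact hj'
        · rw [← h0, Equiv.symm_apply_apply]; exact hj0
      · exfalso
        apply notboth t ht htl
        constructor
        · rw [← h0, Equiv.symm_apply_apply]; exact hj0
        · rw [← h, Equiv.symm_apply_apply]; exact hj'
      · exact σ.injective (h.trans h0.symm)
    rw [hjj, ha] at hsub
    have := hsub (Finset.mem_singleton_self a)
    exact (Finset.mem_sdiff.mp this).1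
  -- choice
  have key' : ∀ t : Fin m, ∃ x : Fin n, t.val ≠ 0 → t.val ≠ m - 1 →
      x ∉ F (σ t) ∧ ∀ j, j < t → x ∈ F (σ j) := by
    intro t
    by_cases h1 : t.val ≠ 0
    · by_cases h2 : t.val ≠ m - 1
      · obtain ⟨x, hx⟩ := key t h1 h2
        exact ⟨x, fun _ _ => hx⟩
      · exact ⟨⟨0, hn0⟩, fun _ h => absurd h h2⟩
    · exact ⟨⟨0, hn0⟩, fun h => absurd h h1⟩
  choose a ha using key'
  -- the target finset
  set Φ : Finset (Fin m) := univ.filter (fun t : Fin m => 2 ≤ t.val ∧ t.val ≤ m - 2) with hΦ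
  have hΦmem : ∀ t : Fin m, t ∈ Φ ↔ (2 ≤ t.val ∧ t.val ≤ m - 2) := by
    intro t; simp [hΦ]
  have hΦprop : ∀ t ∈ Φ, a t ∉ F (σ t) ∧ ∀ j, j < t → a t ∈ F (σ j) := by
    intro t htΦ
    rw [hΦmem] at htΦ
    exact ha t (by omega) (by omega)
  have hΦcard : Φ.card = m - 3 := by
    have himg : Φ.image Fin.val = Finset.Icc 2 (m - 2) := by
      ext b
      simp only [Finset.mem_image, Finset.mem_Icc]
      constructor
      · rintro ⟨t, htΦ, rfl⟩
        exact (hΦmem t).mp htΦ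
      · rintro ⟨hb1, hb2⟩
        exact ⟨⟨b, by omega⟩, (hΦmem _).mpr ⟨hb1, hb2⟩, rfl⟩
    have := Finset.card_image_of_injective Φ (Fin.val_injective)
    rw [himg, Nat.card_Icc] at this
    omega
  have hmaps : ∀ t ∈ Φ, a t ∈ F (σ z0) ∩ F (σ z1) := by
    intro t htΦ
    have h2 := (hΦmem t).mp htΦ
    refine Finset.mem_inter.mpr ⟨?_, ?_⟩
    · exact (hΦprop t htΦ).2 z0 (by rw [Fin.lt_def]; simp only [hz0]; omega)
    · exact (hΦprop t htΦ).2 z1 (by rw [Fin.lt_def]; simp [hz1]; omega)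
  have hinjΦ : Set.InjOn a Φ := by
    intro s hs t ht heq
    by_contra hne
    rcases lt_trichotomy s t with h | h | h
    · have h1 := (hΦprop t ht).2 s h
      have h2 := (hΦprop s hs).1
      rw [heq] at h2
      exact h2 h1
    · exact hne h
    · have h1 := (hΦprop s hs).2 t h
      have h2 := (hΦprop t ht).1
      rw [← heq] at h2
      exact h2 h1
  have hle := Finset.card_le_card_of_injOn a hmaps hinjΦ
  rw [hΦcard] at hle
  -- σ z0 and σ z1 are adjacent
  have hz01 : z0 < z1 := by rw [Fin.lt_def]; simp [hz0, hz1]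
  obtain ⟨j', hj', _, hc1, _⟩ := nbr z1 (by simp [hz1]) z0 hz01
  have hj'0 : j' = z0 := by
    rw [Fin.lt_def] at hj'
    apply Fin.ext
    simp [hz1] at hj'
    simp [hz0]
    omega
  rw [hj'0] at hc1
  have hint := Finset.card_sdiff_add_card_inter (F (σ z0)) (F (σ z1))
  rw [hc1, hcard] at hint
  omega

open Fin.CommRing in
lemma d_add_two_le_n {n m d : ℕ} [NeZero m] (hm : 4 ≤ m)
    (F : Fin m → Finset (Fin n)) (hinj : Function.Injective F)
    (hcard : ∀ i, (F i).card = d)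
    (hcyc' : ∀ i j : Fin m, i ≠ j → (((F i ∩ F j).card + 1 = d) ↔ (j = i + 1 ∨ i = j + 1))) :
    d + 2 ≤ n := by
  classical
  obtain ⟨hone, htwo, hthree⟩ := fin_facts hm
  have hsub2 : ∀ x : Fin m, x - 1 + 1 = x := fun x => by ring
  have hne01 : (0 : Fin m) ≠ 1 := fun h => hone h.symm
  have hne0m : (0 : Fin m) ≠ 0 - 1 := by
    intro h
    apply hone
    have : (0 : Fin m) + 1 = (0 - 1) + 1 := by rw [← h]
    rw [hsub2] at this
    rw [zero_add] at this
    exact this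
  have hne1m : (1 : Fin m) ≠ 0 - 1 := by
    intro h
    apply htwo
    have : (1 : Fin m) + 1 = (0 - 1) + 1 := by rw [← h]
    rw [hsub2] at this
    calc (2 : Fin m) = 1 + 1 := by norm_num
      _ = 0 := this
  have h01 : (F 0 ∩ F 1).card + 1 = d :=
    (hcyc' 0 1 hne01).mpr (Or.inl (by rw [zero_add]))
  have h0m : (F 0 ∩ F (0 - 1)).card + 1 = d :=
    (hcyc' 0 (0 - 1) hne0m).mpr (Or.inr (by rw [hsub2]))
  have hc1 : (F 1 \ F 0).card = 1 := by
    have h2 := Finset.card_sdiff_add_card_inter (F 1) (F 0)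
    rw [Finset.inter_comm, hcard] at h2
    omega
  have hc2 : (F (0 - 1) \ F 0).card = 1 := by
    have h2 := Finset.card_sdiff_add_card_inter (F (0 - 1)) (F 0)
    rw [Finset.inter_comm, hcard] at h2
    omega
  obtain ⟨a₁, ha₁⟩ := Finset.card_eq_one.mp hc1
  obtain ⟨a₂, ha₂⟩ := Finset.card_eq_one.mp hc2
  have ha₁m : a₁ ∈ F 1 \ F 0 := by rw [ha₁]; exact Finset.mem_singleton_self _
  have ha₂m : a₂ ∈ F (0 - 1) \ F 0 := by rw [ha₂]; exact Finset.mem_singleton_self _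
  have hane : a₁ ≠ a₂ := by
    intro h
    subst h
    -- show F 1 and F (0-1) would be adjacent
    set X := F 0 ∩ F 1 with hX
    set Y := F 0 ∩ F (0 - 1) with hY
    have e1 := Finset.card_union_add_card_inter X Y
    have e4 : (X ∪ Y).card ≤ d := by
      rw [← hcard 0]
      apply Finset.card_le_card
      intro b hb
      rcases Finset.mem_union.mp hb with h | h
      · exact (Finset.mem_inter.mp h).1
      · exact (Finset.mem_inter.mp h).1
    have hains : a₁ ∉ X ∩ Y := by
      intro h
      exact (Finset.mem_sdiff.mp ha₁m).2 (Finset.mem_inter.mp (Finset.mem_inter.mp h).1).1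
    have e5 : (insert a₁ (X ∩ Y)).card = (X ∩ Y).card + 1 :=
      Finset.card_insert_of_notMem hains
    have e6 : (insert a₁ (X ∩ Y)).card ≤ (F 1 ∩ F (0 - 1)).card := by
      apply Finset.card_le_card
      intro b hb
      rcases Finset.mem_insert.mp hb with h | h
      · subst h
        exact Finset.mem_inter.mpr ⟨(Finset.mem_sdiff.mp ha₁m).1, (Finset.mem_sdiff.mp ha₂m).1⟩
      · have hX1 := Finset.mem_inter.mp (Finset.mem_inter.mp h).1
        have hY1 := Finset.mem_inter.mp (Finset.mem_inter.mp h).2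
        exact Finset.mem_inter.mpr ⟨hX1.2, hY1.2⟩
    have e7 : (F 1 ∩ F (0 - 1)).card ≤ d := by
      rw [← hcard 1]
      exact Finset.card_le_card Finset.inter_subset_left
    have e8 : (F 1 ∩ F (0 - 1)).card ≠ d := by
      intro h
      have hsub : F 1 ∩ F (0 - 1) = F 1 :=
        Finset.eq_of_subset_of_card_le Finset.inter_subset_left (by rw [h, hcard])
      have hsub' : F 1 ∩ F (0 - 1) = F (0 - 1) :=
        Finset.eq_of_subset_of_card_le Finset.inter_subset_right (by rw [h, hcard])
      exact hne1m (hinj (hsub.symm.trans hsub'))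
    have hXc : X.card + 1 = d := h01
    have hYc : Y.card + 1 = d := h0m
    have hcFF : (F 1 ∩ F (0 - 1)).card + 1 = d := by omega
    have := (hcyc' 1 (0 - 1) hne1m).mp hcFF
    rcases this with h | h
    · -- 0 - 1 = 1 + 1 = 2, so 0 = 3
      apply hthree
      have h3 : (0 : Fin m) = 1 + 1 + 1 := by
        rw [← h, hsub2]
      rw [h3]; norm_num
    · -- 1 = (0 - 1) + 1 = 0
      rw [hsub2] at h
      exact hone h
  have hfinal : (insert a₁ (insert a₂ (F 0))).card = d + 2 := by
    rw [Finset.card_insert_of_notMem, Finset.card_insert_of_notMem, hcard]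
    · exact (Finset.mem_sdiff.mp ha₂m).2
    · intro h
      rcases Finset.mem_insert.mp h with h | h
      · exact hane h
      · exact (Finset.mem_sdiff.mp ha₁m).2 h
  calc d + 2 = (insert a₁ (insert a₂ (F 0))).card := hfinal.symm
    _ ≤ Fintype.card (Fin n) := Finset.card_le_univ _
    _ = n := Fintype.card_fin n

open Fin.CommRing in
lemma n_le_m {n m d : ℕ} [NeZero m] (hm : 4 ≤ m)
    (F : Fin m → Finset (Fin n)) (hcard : ∀ i, (F i).card = d)
    (hvar : ∀ a : Fin n, (∃ j, a ∈ F j) ∧ (∃ j, a ∉ F j))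
    (hcyc' : ∀ i j : Fin m, i ≠ j → (((F i ∩ F j).card + 1 = d) ↔ (j = i + 1 ∨ i = j + 1))) :
    n ≤ m := by
  classical
  obtain ⟨hone, htwo, hthree⟩ := fin_facts hm
  have hxne : ∀ x : Fin m, x ≠ x + 1 := by
    intro x h
    apply hone
    have : x + 0 = x + 1 := by rw [add_zero]; exact h
    exact (add_left_cancel this).symm
  have hex : ∀ a : Fin n, ∃ i : Fin m, a ∈ F i ∧ a ∉ F (i + 1) := by
    intro a
    by_contra hcon
    push_neg at hcon
    obtain ⟨⟨j₀, hj₀⟩, ⟨j₁, hj₁⟩⟩ := hvar a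
    have hstep : ∀ c : ℕ, a ∈ F (j₀ + (c : Fin m)) := by
      intro c
      induction c with
      | zero => simpa using hj₀
      | succ c ih =>
          have h2 := hcon _ ih
          have h3 : j₀ + ((c + 1 : ℕ) : Fin m) = j₀ + (c : Fin m) + 1 := by
            push_cast
            ring
          rw [h3]
          exact h2
    have := hstep (j₁ - j₀ : Fin m).val
    rw [Fin.cast_val_eq_self] at this
    have h4 : j₀ + (j₁ - j₀) = j₁ := by ring
    rw [h4] at this
    exact hj₁ this
  choose g hg using hex
  have ginj : Function.Injective g := by
    intro x y hxy
    have hadj : (F (g x) ∩ F (g x + 1)).card + 1 = d :=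
      (hcyc' (g x) (g x + 1) (hxne (g x))).mpr (Or.inl rfl)
    have hc : (F (g x) \ F (g x + 1)).card = 1 := by
      have h2 := Finset.card_sdiff_add_card_inter (F (g x)) (F (g x + 1))
      rw [hcard] at h2
      omega
    obtain ⟨b, hb⟩ := Finset.card_eq_one.mp hc
    have hx2 : x ∈ F (g x) \ F (g x + 1) := Finset.mem_sdiff.mpr ⟨(hg x).1, (hg x).2⟩
    have hy2 : y ∈ F (g y) \ F (g y + 1) := Finset.mem_sdiff.mpr ⟨(hg y).1, (hg y).2⟩
    rw [← hxy] at hy2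
    rw [hb] at hx2 hy2
    rw [Finset.mem_singleton] at hx2 hy2
    rw [hx2, hy2]
  have := Fintype.card_le_of_injective g ginj
  simpa using this


/-- Suppose every variable divides at least one but not all of the generators,
and `G_I` is the cycle `u 0 — u 1 — ⋯ — u (m-1) — u 0` with `m ≥ 4`. If `d + 2 < n` or
`m ≠ n` then `I` does not have linear quotients. -/
theorem stmt4 {k : Type*} [Field k] {n m d : ℕ} [NeZero m] (hm : 4 ≤ m)
    (F : Fin m → Finset (Fin n)) (hinj : Function.Injective F)
    (hcard : ∀ i, (F i).card = d)
    (hvar : ∀ a : Fin n, (∃ j, a ∈ F j) ∧ (∃ j, a ∉ F j))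
    (hcyc : ∀ i j : Fin m, (syzGraph F d).Adj i j ↔ (j = i + 1 ∨ i = j + 1))
    (h : d + 2 < n ∨ m ≠ n) :
    ¬ LinQuot (fun i : Fin m => ∏ l ∈ F i, (X l : MvPolynomial (Fin n) k)) := by
  intro hLQ
  obtain ⟨σ, hσ⟩ := hLQ
  have hcyc' : ∀ i j : Fin m, i ≠ j → (((F i ∩ F j).card + 1 = d) ↔ (j = i + 1 ∨ i = j + 1)) := by
    intro i j hne
    constructor
    · intro hc
      exact (hcyc i j).mp ⟨hne, hc⟩
    · intro hor
      exact ((hcyc i j).mpr hor).2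
  have SC : ∀ t : Fin m, t.val ≠ 0 → ∀ j, j < t → ∃ j', j' < t ∧
      (F (σ j') \ F (σ t)).card = 1 ∧ F (σ j') \ F (σ t) ⊆ F (σ j) \ F (σ t) :=
    fun t ht j hj => step_cond F hinj hcard σ hσ t ht j hj
  have hn2 : d + 2 ≤ n := d_add_two_le_n hm F hinj hcard hcyc'
  have hm2 : m ≤ d + 2 := m_le_d_add_two hm (by omega) F hcard hcyc' σ SC
  have hnm : n ≤ m := n_le_m hm F hcard hvar hcyc'
  rcases h with h | h <;> omega
end

section
/- Assume m ≥ 2 and that the first syzygy module ker φ is a free S-module (i.e., the projective dimension of I is at most 1). Then I has linear relations if and only if the syzygy graph G_I is a connected graph. -/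
open MvPolynomial Finset

attribute [local instance] Classical.propDecidable

section Aux

variable {k : Type*} [Field k] {n : ℕ}

/-- indicator finsupp of a finset -/
noncomputable def indF {n : ℕ} (T : Finset (Fin n)) : Fin n →₀ ℕ := ∑ l ∈ T, Finsupp.single l 1

lemma prod_X_eq_monomial (T : Finset (Fin n)) :
    (∏ l ∈ T, (X l : MvPolynomial (Fin n) k)) = monomial (indF T) 1 := by
  classical
  induction T using Finset.induction with
  | empty => simp [indF, monomial_zero']
  | insert a s h ih =>
    rw [Finset.prod_insert h, ih]
    rw [← one_mul (X _ : MvPolynomial (Fin n) k), ← C_1, C_mul_X_eq_monomial (a := (1:k)),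
      monomial_mul, one_mul]
    simp [indF, Finset.sum_insert h]

lemma indF_apply (T : Finset (Fin n)) (l : Fin n) : indF T l = if l ∈ T then 1 else 0 := by
  classical
  rw [indF]
  rw [Finsupp.finset_sum_apply]
  simp [Finsupp.single_apply, Finset.sum_ite_eq' T l (fun _ => 1)]

lemma indF_inj : Function.Injective (indF (n := n)) := by
  intro a b h
  ext l
  have := congrArg (fun f => f l) h
  simp only [indF_apply] at this
  by_cases ha : l ∈ a <;> by_cases hb : l ∈ b <;> simp [ha, hb] at this ⊢


variable {k : Type*} [Field k] {n : ℕ}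

lemma hc_mul (j : ℕ) (p q : MvPolynomial (Fin n) k) :
    homogeneousComponent j (p * q) =
      ∑ ab ∈ Finset.HasAntidiagonal.antidiagonal j,
        homogeneousComponent ab.1 p * homogeneousComponent ab.2 q := by
  classical
  conv_lhs => rw [← sum_homogeneousComponent p, ← sum_homogeneousComponent q]
  rw [Finset.sum_mul_sum, ← Finset.sum_product', map_sum]
  have key : ∀ ab : ℕ × ℕ,
      homogeneousComponent j (homogeneousComponent ab.1 p * homogeneousComponent ab.2 q)
        = if j = ab.1 + ab.2 then homogeneousComponent ab.1 p * homogeneousComponent ab.2 q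
          else 0 := by
    intro ab
    exact homogeneousComponent_of_mem
      (SetLike.mul_mem_graded (homogeneousComponent_mem ab.1 p) (homogeneousComponent_mem ab.2 q))
  simp_rw [key]
  rw [← Finset.sum_filter]
  set A := (Finset.range (p.totalDegree + 1) ×ˢ Finset.range (q.totalDegree + 1))
  have h1 : A.filter (fun ab => j = ab.1 + ab.2) = (Finset.HasAntidiagonal.antidiagonal j).filter (fun ab => ab ∈ A) := by
    ext ab
    simp [Finset.HasAntidiagonal.mem_antidiagonal, And.comm, eq_comm]
  rw [h1, Finset.sum_filter]
  apply Finset.sum_congr rfl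
  intro ab hab
  by_cases h : ab ∈ A
  · simp [h]
  · simp only [h, if_false]
    simp only [A, Finset.mem_product, Finset.mem_range, not_and_or, not_lt] at h
    rcases h with h | h
    · rw [homogeneousComponent_eq_zero _ p (by omega), zero_mul]
    · rw [homogeneousComponent_eq_zero _ q (by omega), mul_zero]

lemma hc_mul_homog (p q : MvPolynomial (Fin n) k) {e : ℕ} (hq : q.IsHomogeneous e) (j : ℕ) :
    homogeneousComponent (j + e) (p * q) = homogeneousComponent j p * q := by
  classical
  rw [hc_mul]
  rw [Finset.sum_eq_single (j, e)]
  · rw [homogeneousComponent_of_mem (show q ∈ homogeneousSubmodule (Fin n) k e from hq),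
      if_pos rfl]
  · intro ab hab hne
    rw [homogeneousComponent_of_mem (show q ∈ homogeneousSubmodule (Fin n) k e from hq)]
    rw [if_neg, mul_zero]
    intro h; apply hne
    rw [Finset.HasAntidiagonal.mem_antidiagonal] at hab
    ext
    · omega
    · exact h
  · intro h
    exact absurd (Finset.HasAntidiagonal.mem_antidiagonal.2 (by simp)) h

lemma hc_lt_mul_homog (p q : MvPolynomial (Fin n) k) {e : ℕ} (hq : q.IsHomogeneous e) {j : ℕ}
    (hj : j < e) : homogeneousComponent j (p * q) = 0 := by
  classical
  rw [hc_mul]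
  apply Finset.sum_eq_zero
  intro ab hab
  rw [Finset.HasAntidiagonal.mem_antidiagonal] at hab
  rw [homogeneousComponent_of_mem (show q ∈ homogeneousSubmodule (Fin n) k e from hq),
    if_neg (by omega), mul_zero]

end Aux
section Aux2
variable {k : Type*} [Field k] {n m d : ℕ}

lemma phi_single_s7 (u : Fin m → MvPolynomial (Fin n) k) (i : Fin m) (p : MvPolynomial (Fin n) k) :
    phi u (Pi.single i p) = p * u i := by
  classical
  have h0 : phi u (Pi.single i p) =
      ∑ j, (Pi.single i p : Fin m → MvPolynomial (Fin n) k) j * u j := rfl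
  rw [h0, Finset.sum_eq_single i]
  · simp
  · intro j _ hj
    simp [Pi.single_apply, hj.symm]
  · simp

lemma linSyz_sub_ker (u : Fin m → MvPolynomial (Fin n) k) :
    linSyz u ⊆ LinearMap.ker (phi u) := by
  rintro w ⟨i, j, a, b, heq, rfl⟩
  rw [SetLike.mem_coe, LinearMap.mem_ker, map_sub, phi_single_s7, phi_single_s7, heq, sub_self]

lemma span_linSyz_le_ker (u : Fin m → MvPolynomial (Fin n) k) :
    Submodule.span (MvPolynomial (Fin n) k) (linSyz u) ≤ LinearMap.ker (phi u) :=
  Submodule.span_le.2 (linSyz_sub_ker u)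

variable (F : Fin m → Finset (Fin n))

lemma u_ne_zero (i : Fin m) : (∏ l ∈ F i, (X l : MvPolynomial (Fin n) k)) ≠ 0 := by
  rw [prod_X_eq_monomial]
  simp [MvPolynomial.monomial_eq_zero]

lemma u_homog (hcard : ∀ i, (F i).card = d) (i : Fin m) :
    (∏ l ∈ F i, (X l : MvPolynomial (Fin n) k)).IsHomogeneous d := by
  have := MvPolynomial.IsHomogeneous.prod (F i) (fun l => (X l : MvPolynomial (Fin n) k))
    (fun _ => 1) (fun l _ => isHomogeneous_X k l)
  simpa [hcard i] using this

lemma X_mul_monomial_one (a : Fin n) (s : Fin n →₀ ℕ) :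
    (X a : MvPolynomial (Fin n) k) * monomial s 1 = monomial (Finsupp.single a 1 + s) 1 := by
  have h : (X a : MvPolynomial (Fin n) k) = monomial (Finsupp.single a 1) 1 := by
    rw [← C_mul_X_eq_monomial, C_1, one_mul]
  rw [h, monomial_mul, one_mul]

/-- A nonzero linear syzygy comes from an edge of the syzygy graph. -/
lemma linSyz_structure (hinj : Function.Injective F) (hcard : ∀ i, (F i).card = d)
    {w : Fin m → MvPolynomial (Fin n) k}
    (hw : w ∈ linSyz (fun i : Fin m => ∏ l ∈ F i, (X l : MvPolynomial (Fin n) k))) :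
    w = 0 ∨ ∃ i j : Fin m, (syzGraph F d).Adj i j ∧
      (∀ p, w p ≠ 0 → p = i ∨ p = j) ∧ (∀ p, (w p).IsHomogeneous 1) := by
  classical
  obtain ⟨i, j, a, b, heq, rfl⟩ := hw
  simp only [prod_X_eq_monomial] at heq
  by_cases hij : i = j
  · subst hij
    left
    have hX : (X a : MvPolynomial (Fin n) k) = X b := by
      have hne := u_ne_zero (k := k) F i
      rw [prod_X_eq_monomial] at hne
      exact mul_right_cancel₀ hne heq
    rw [hX]; simp
  · right
    refine ⟨i, j, ?_, ?_, ?_⟩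
    · -- adjacency
      have hmon : monomial (Finsupp.single a 1 + indF (F i)) (1:k)
          = monomial (Finsupp.single b 1 + indF (F j)) 1 := by
        rw [← X_mul_monomial_one, ← X_mul_monomial_one]; exact heq
      have heq' : Finsupp.single a 1 + indF (F i) = Finsupp.single b 1 + indF (F j) :=
        MvPolynomial.monomial_left_injective one_ne_zero hmon
      have hpt : ∀ l, (if a = l then 1 else 0) + (if l ∈ F i then 1 else 0)
          = (if b = l then 1 else 0) + (if l ∈ F j then (1:ℕ) else 0) := by
        intro l
        have h := congrArg (fun f => f l) heq'
        simpa only [Finsupp.add_apply, Finsupp.single_apply, indF_apply] using h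
      have hFne : F i ≠ F j := fun h => hij (hinj h)
      have hab : a ≠ b := by
        intro h; subst h
        exact hFne (indF_inj (add_left_cancel heq'))
      have hai : a ∉ F i := by
        intro ha
        have h2 := hpt a
        simp only [if_pos rfl, if_neg (Ne.symm hab), if_pos ha] at h2
        by_cases h3 : a ∈ F j <;> simp [h3] at h2
      have hbj : b ∉ F j := by
        intro hb
        have h2 := hpt b
        simp only [if_neg hab, if_pos rfl, if_pos hb] at h2
        by_cases h3 : b ∈ F i <;> simp [h3] at h2
      have hbi : b ∈ F i := by
        have h2 := hpt b
        simp only [if_neg hab, if_pos rfl, if_neg hbj] at h2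
        by_contra h3; simp [h3] at h2
      have haj : a ∈ F j := by
        have h2 := hpt a
        simp only [if_pos rfl, if_neg (Ne.symm hab), if_neg hai] at h2
        by_contra h3; simp [h3] at h2
      refine ⟨hij, ?_⟩
      have hint : F i ∩ F j = (F i).erase b := by
        ext l
        simp only [Finset.mem_inter, Finset.mem_erase]
        constructor
        · rintro ⟨h1, h2⟩
          exact ⟨fun hlb => hbj (hlb ▸ h2), h1⟩
        · rintro ⟨hlb, h1⟩
          refine ⟨h1, ?_⟩
          have h2 := hpt l
          have hla : a ≠ l := fun h => hai (h ▸ h1)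
          simp only [if_neg hla, if_neg (fun h => hlb h.symm : ¬ b = l), if_pos h1] at h2
          by_contra h3; simp [h3] at h2
      rw [hint, Finset.card_erase_of_mem hbi, hcard i]
      have hd : 1 ≤ d := by rw [← hcard i]; exact Finset.card_pos.2 ⟨b, hbi⟩
      omega
    · intro p hp
      by_cases h1 : p = i
      · left; exact h1
      · right
        by_contra h2
        simp [Pi.sub_apply, Pi.single_apply, h1, h2] at hp
    · intro p
      simp only [Pi.sub_apply, Pi.single_apply]
      apply MvPolynomial.IsHomogeneous.sub
      · split <;> [exact isHomogeneous_X k a; exact isHomogeneous_zero _ _ _]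
      · split <;> [exact isHomogeneous_X k b; exact isHomogeneous_zero _ _ _]

end Aux2
section Aux3
variable {k : Type*} [Field k] {n m d : ℕ}

lemma adj_linSyz (F : Fin m → Finset (Fin n)) (hcard : ∀ i, (F i).card = d) {i j : Fin m}
    (h : (syzGraph F d).Adj i j) :
    ∃ a b : Fin n, X a * (∏ l ∈ F i, (X l : MvPolynomial (Fin n) k))
      = X b * (∏ l ∈ F j, (X l : MvPolynomial (Fin n) k)) := by
  classical
  obtain ⟨hij, hd⟩ := h
  have hci : (F i ∩ F j).card + (F i \ F j).card = (F i).card := Finset.card_inter_add_card_sdiff _ _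
  have hcj : (F j ∩ F i).card + (F j \ F i).card = (F j).card := Finset.card_inter_add_card_sdiff _ _
  rw [Finset.inter_comm] at hcj
  have h1 : (F i \ F j).card = 1 := by rw [hcard i] at hci; omega
  have h2 : (F j \ F i).card = 1 := by rw [hcard j] at hcj; omega
  obtain ⟨b, hb⟩ := Finset.card_eq_one.1 h1
  obtain ⟨a, ha⟩ := Finset.card_eq_one.1 h2
  have hbmem : ∀ l, l ∈ F i ∧ l ∉ F j ↔ l = b := by
    intro l; rw [← Finset.mem_sdiff, hb, Finset.mem_singleton]
  have hamem : ∀ l, l ∈ F j ∧ l ∉ F i ↔ l = a := by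
    intro l; rw [← Finset.mem_sdiff, ha, Finset.mem_singleton]
  have key : Finsupp.single a 1 + indF (F i) = Finsupp.single b 1 + indF (F j) := by
    ext l
    simp only [Finsupp.add_apply, Finsupp.single_apply, indF_apply]
    have hbi : b ∈ F i := ((hbmem b).2 rfl).1
    have hbj : b ∉ F j := ((hbmem b).2 rfl).2
    have haj : a ∈ F j := ((hamem a).2 rfl).1
    have hai : a ∉ F i := ((hamem a).2 rfl).2
    by_cases hli : l ∈ F i <;> by_cases hlj : l ∈ F j
    · rw [if_neg (fun h : a = l => hai (h ▸ hli)), if_neg (fun h : b = l => hbj (h ▸ hlj)),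
        if_pos hli, if_pos hlj]
    · have hlb : l = b := (hbmem l).1 ⟨hli, hlj⟩
      rw [if_neg (fun h : a = l => hai (h ▸ hli)), if_pos hlb.symm, if_pos hli, if_neg hlj]
    · have hla : l = a := (hamem l).1 ⟨hlj, hli⟩
      rw [if_pos hla.symm, if_neg (fun h : b = l => hbj (h ▸ hlj)), if_neg hli, if_pos hlj]
    · rw [if_neg (fun h : a = l => hlj (h ▸ haj)), if_neg (fun h : b = l => hli (h ▸ hbi)),
        if_neg hli, if_neg hlj]
  refine ⟨a, b, ?_⟩
  rw [prod_X_eq_monomial, prod_X_eq_monomial, X_mul_monomial_one, X_mul_monomial_one, key]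

/-- componentwise homogeneous component -/
noncomputable def pic {k : Type*} [Field k] {n m : ℕ} (j : ℕ)
    (z : Fin m → MvPolynomial (Fin n) k) : Fin m → MvPolynomial (Fin n) k :=
  fun i => homogeneousComponent j (z i)

lemma pic_apply {j : ℕ} (z : Fin m → MvPolynomial (Fin n) k) (i : Fin m) :
    pic j z i = homogeneousComponent j (z i) := rfl

lemma pic_add (j : ℕ) (y z : Fin m → MvPolynomial (Fin n) k) :
    pic j (y + z) = pic j y + pic j z := by
  funext i; simp [pic]

lemma pic_sub (j : ℕ) (y z : Fin m → MvPolynomial (Fin n) k) :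
    pic j (y - z) = pic j y - pic j z := by
  funext i; simp [pic]

lemma pic_smul (j : ℕ) (c : MvPolynomial (Fin n) k) (y : Fin m → MvPolynomial (Fin n) k) :
    pic j (c • y) = ∑ ab ∈ Finset.HasAntidiagonal.antidiagonal j,
      homogeneousComponent ab.1 c • pic ab.2 y := by
  funext i
  rw [Finset.sum_apply]
  simp only [pic, Pi.smul_apply, smul_eq_mul]
  rw [hc_mul]

/-- componentwise homogeneity -/
def PicHomog {k : Type*} [Field k] {n m : ℕ} (j : ℕ) (z : Fin m → MvPolynomial (Fin n) k) : Prop :=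
  ∀ i, (z i).IsHomogeneous j

lemma picHomog_pic (j : ℕ) (z : Fin m → MvPolynomial (Fin n) k) : PicHomog j (pic j z) :=
  fun i => homogeneousComponent_isHomogeneous j (z i)

lemma pic_of_homog {j : ℕ} {z : Fin m → MvPolynomial (Fin n) k} (hz : PicHomog j z) :
    pic j z = z := by
  funext i
  rw [pic_apply, homogeneousComponent_of_mem
    (show z i ∈ homogeneousSubmodule (Fin n) k j from hz i), if_pos rfl]

variable (F : Fin m → Finset (Fin n))

lemma phi_pic (hcard : ∀ i, (F i).card = d) (j : ℕ) (z : Fin m → MvPolynomial (Fin n) k) :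
    phi (fun i : Fin m => ∏ l ∈ F i, (X l : MvPolynomial (Fin n) k)) (pic j z)
      = homogeneousComponent (j + d)
          (phi (fun i : Fin m => ∏ l ∈ F i, (X l : MvPolynomial (Fin n) k)) z) := by
  have h1 : ∀ w : Fin m → MvPolynomial (Fin n) k,
      phi (fun i : Fin m => ∏ l ∈ F i, (X l : MvPolynomial (Fin n) k)) w
        = ∑ i, w i * ∏ l ∈ F i, X l := fun w => rfl
  rw [h1, h1, map_sum]
  apply Finset.sum_congr rfl
  intro i _
  rw [pic_apply, hc_mul_homog _ _ (u_homog F hcard i)]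

lemma ker_pic (hcard : ∀ i, (F i).card = d) (j : ℕ) {z : Fin m → MvPolynomial (Fin n) k}
    (hz : z ∈ LinearMap.ker (phi (fun i : Fin m => ∏ l ∈ F i, (X l : MvPolynomial (Fin n) k)))) :
    pic j z ∈ LinearMap.ker (phi (fun i : Fin m => ∏ l ∈ F i, (X l : MvPolynomial (Fin n) k))) := by
  rw [LinearMap.mem_ker] at hz ⊢
  rw [phi_pic F hcard, hz, map_zero]

lemma ker_pic_zero (hinj : Function.Injective F) (hcard : ∀ i, (F i).card = d)
    {z : Fin m → MvPolynomial (Fin n) k}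
    (hz : z ∈ LinearMap.ker (phi (fun i : Fin m => ∏ l ∈ F i, (X l : MvPolynomial (Fin n) k)))) :
    pic 0 z = 0 := by
  classical
  have h0 := ker_pic F hcard 0 hz
  rw [LinearMap.mem_ker] at h0
  have h1 : ∀ w : Fin m → MvPolynomial (Fin n) k,
      phi (fun i : Fin m => ∏ l ∈ F i, (X l : MvPolynomial (Fin n) k)) w
        = ∑ i, w i * ∏ l ∈ F i, X l := fun w => rfl
  rw [h1] at h0
  have hcc : ∀ i₀, coeff 0 (z i₀) = 0 := by
    intro i₀
    have h2 := congrArg (coeff (indF (F i₀))) h0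
    rw [coeff_sum] at h2
    simp only [pic_apply, homogeneousComponent_zero, prod_X_eq_monomial] at h2
    simp only [C_mul_monomial, mul_one, coeff_monomial] at h2
    rw [Finset.sum_eq_single i₀] at h2
    · rw [if_pos rfl] at h2
      simpa using h2
    · intro i _ hne
      rw [if_neg (fun h => hne (hinj (indF_inj h)))]
    · simp
  funext i
  rw [pic_apply, homogeneousComponent_zero, hcc i]
  simp

end Aux3
section Aux4
variable {k : Type*} [Field k] {n m d : ℕ}

/-- evaluation at all-ones, componentwise -/
noncomputable def theta {k : Type*} [Field k] {n m : ℕ}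
    (z : Fin m → MvPolynomial (Fin n) k) : Fin m → k :=
  fun i => eval (fun _ => (1:k)) (z i)

lemma theta_add (y z : Fin m → MvPolynomial (Fin n) k) :
    theta (y + z) = theta y + theta z := by
  funext i; simp [theta]

lemma theta_sub (y z : Fin m → MvPolynomial (Fin n) k) :
    theta (y - z) = theta y - theta z := by
  funext i; simp [theta]

lemma theta_single (i : Fin m) (p : MvPolynomial (Fin n) k) :
    theta (Pi.single i p) = Pi.single i (eval (fun _ => (1:k)) p) := by
  funext q
  by_cases h : q = i
  · subst h; simp [theta]
  · simp [theta, Pi.single_apply, h]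

variable (F : Fin m → Finset (Fin n))

/-- the chosen linear syzygy attached to an edge -/
noncomputable def edgeSyz (hcard : ∀ i, (F i).card = d) {i j : Fin m}
    (h : (syzGraph F d).Adj i j) : Fin m → MvPolynomial (Fin n) k :=
  Pi.single i (X (adj_linSyz (k := k) F hcard h).choose)
    - Pi.single j (X (adj_linSyz (k := k) F hcard h).choose_spec.choose)

lemma edgeSyz_mem_linSyz (hcard : ∀ i, (F i).card = d) {i j : Fin m}
    (h : (syzGraph F d).Adj i j) :
    edgeSyz F hcard h ∈ linSyz (fun i : Fin m => ∏ l ∈ F i, (X l : MvPolynomial (Fin n) k)) :=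
  ⟨i, j, _, _, (adj_linSyz (k := k) F hcard h).choose_spec.choose_spec, rfl⟩

lemma edgeSyz_homog (hcard : ∀ i, (F i).card = d) {i j : Fin m}
    (h : (syzGraph F d).Adj i j) : PicHomog 1 (edgeSyz F (k := k) hcard h) := by
  intro p
  simp only [edgeSyz, Pi.sub_apply, Pi.single_apply]
  apply MvPolynomial.IsHomogeneous.sub
  · split <;> [exact isHomogeneous_X k _; exact isHomogeneous_zero _ _ _]
  · split <;> [exact isHomogeneous_X k _; exact isHomogeneous_zero _ _ _]

lemma theta_edgeSyz (hcard : ∀ i, (F i).card = d) {i j : Fin m}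
    (h : (syzGraph F d).Adj i j) :
    theta (edgeSyz F (k := k) hcard h) = Pi.single i 1 - Pi.single j 1 := by
  rw [edgeSyz, theta_sub, theta_single, theta_single]
  simp

/-- telescoping sum of edge syzygies along a walk -/
noncomputable def hWalk (hcard : ∀ i, (F i).card = d) :
    ∀ {p q : Fin m}, (syzGraph F d).Walk p q → (Fin m → MvPolynomial (Fin n) k)
  | _, _, SimpleGraph.Walk.nil => 0
  | _, _, SimpleGraph.Walk.cons h w => edgeSyz F hcard h + hWalk hcard w

lemma hWalk_mem_span (hcard : ∀ i, (F i).card = d) {p q : Fin m}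
    (w : (syzGraph F d).Walk p q) :
    hWalk F (k := k) hcard w ∈ Submodule.span (MvPolynomial (Fin n) k)
      (linSyz (fun i : Fin m => ∏ l ∈ F i, (X l : MvPolynomial (Fin n) k))) := by
  induction w with
  | nil => exact Submodule.zero_mem _
  | cons h w ih =>
    exact Submodule.add_mem _ (Submodule.subset_span (edgeSyz_mem_linSyz F hcard h)) ih

lemma hWalk_homog (hcard : ∀ i, (F i).card = d) {p q : Fin m}
    (w : (syzGraph F d).Walk p q) : PicHomog 1 (hWalk F (k := k) hcard w) := by
  induction w with
  | nil => intro i; exact isHomogeneous_zero _ _ _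
  | cons h w ih =>
    intro i
    exact ((edgeSyz_homog F hcard h) i).add (ih i)

lemma theta_hWalk (hcard : ∀ i, (F i).card = d) {p q : Fin m}
    (w : (syzGraph F d).Walk p q) :
    theta (hWalk F (k := k) hcard w) = Pi.single p 1 - Pi.single q 1 := by
  induction w with
  | nil => funext i; simp [hWalk, theta]
  | cons h w ih =>
    rw [hWalk, theta_add, theta_edgeSyz F hcard, ih]
    abel

end Aux4
section Forward
variable {k : Type*} [Field k] {n m d : ℕ}

/-- projection onto a set of coordinates -/
noncomputable def prA {k : Type*} [Field k] {n m : ℕ} (A : Set (Fin m)) :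
    (Fin m → MvPolynomial (Fin n) k) →ₗ[MvPolynomial (Fin n) k]
      (Fin m → MvPolynomial (Fin n) k) where
  toFun z := fun i => if i ∈ A then z i else 0
  map_add' y z := by funext i; by_cases h : i ∈ A <;> simp [h]
  map_smul' c z := by funext i; by_cases h : i ∈ A <;> simp [h]

lemma prA_single_mem {A : Set (Fin m)} {i : Fin m} (h : i ∈ A) (p : MvPolynomial (Fin n) k) :
    prA A (Pi.single i p) = Pi.single i p := by
  funext q
  show (if q ∈ A then (Pi.single i p : Fin m → MvPolynomial (Fin n) k) q else 0) = _
  by_cases hq : q = i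
  · subst hq; rw [if_pos h]
  · rw [Pi.single_apply, if_neg hq]; simp

lemma prA_single_not_mem {A : Set (Fin m)} {i : Fin m} (h : i ∉ A) (p : MvPolynomial (Fin n) k) :
    prA A (Pi.single i p) = 0 := by
  funext q
  show (if q ∈ A then (Pi.single i p : Fin m → MvPolynomial (Fin n) k) q else 0)
    = (0 : Fin m → MvPolynomial (Fin n) k) q
  by_cases hq : q ∈ A
  · rw [if_pos hq, Pi.single_apply, if_neg (fun he : q = i => h (he ▸ hq))]; rfl
  · rw [if_neg hq]; rfl

lemma prA_span_linSyz (F : Fin m → Finset (Fin n)) (hinj : Function.Injective F)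
    (hcard : ∀ i, (F i).card = d) {A : Set (Fin m)}
    (hA : ∀ i j : Fin m, (syzGraph F d).Adj i j → (i ∈ A ↔ j ∈ A))
    {z : Fin m → MvPolynomial (Fin n) k}
    (hz : z ∈ Submodule.span (MvPolynomial (Fin n) k)
      (linSyz (fun i : Fin m => ∏ l ∈ F i, (X l : MvPolynomial (Fin n) k)))) :
    prA A z ∈ Submodule.span (MvPolynomial (Fin n) k)
      (linSyz (fun i : Fin m => ∏ l ∈ F i, (X l : MvPolynomial (Fin n) k))) := by
  induction hz using Submodule.span_induction with
  | mem w hw =>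
    rcases linSyz_structure F hinj hcard hw with h0 | ⟨i, j, hadj, hsupp, _⟩
    · rw [h0, map_zero]; exact Submodule.zero_mem _
    · by_cases hiA : i ∈ A
      · have : prA A w = w := by
          funext q
          show (if q ∈ A then w q else 0) = w q
          by_cases hq : q ∈ A
          · rw [if_pos hq]
          · rw [if_neg hq]
            by_contra hne
            rcases hsupp q (fun h => hne h.symm) with rfl | rfl
            · exact hq hiA
            · exact hq ((hA i q hadj).1 hiA)
        rw [this]; exact Submodule.subset_span hw
      · have : prA A w = 0 := by
          funext q
          show (if q ∈ A then w q else 0) = 0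
          by_cases hq : q ∈ A
          · rw [if_pos hq]
            by_contra hne
            rcases hsupp q hne with rfl | rfl
            · exact hiA hq
            · exact hiA ((hA i q hadj).2 hq)
          · rw [if_neg hq]
        rw [this]; exact Submodule.zero_mem _
  | zero => rw [map_zero]; exact Submodule.zero_mem _
  | add x y _ _ hx hy => rw [map_add]; exact Submodule.add_mem _ hx hy
  | smul c x _ hx => rw [map_smul]; exact Submodule.smul_mem _ c hx

lemma forward_direction (hm : 2 ≤ m) (F : Fin m → Finset (Fin n))
    (hinj : Function.Injective F) (hcard : ∀ i, (F i).card = d)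
    (h : HasLinRel (fun i : Fin m => ∏ l ∈ F i, (X l : MvPolynomial (Fin n) k))) :
    (syzGraph F d).Connected := by
  classical
  have hne : Nonempty (Fin m) := ⟨⟨0, by omega⟩⟩
  rw [SimpleGraph.connected_iff]
  refine ⟨?_, hne⟩
  intro i j
  by_contra hreach
  set A : Set (Fin m) := {p | (syzGraph F d).Reachable i p} with hAdef
  have hA : ∀ p q : Fin m, (syzGraph F d).Adj p q → (p ∈ A ↔ q ∈ A) := by
    intro p q hadj
    constructor
    · intro hp; exact hp.trans hadj.reachable
    · intro hq; exact hq.trans hadj.symm.reachable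
  set vi : MvPolynomial (Fin n) k := ∏ l ∈ F j \ F i, X l with hvi
  set vj : MvPolynomial (Fin n) k := ∏ l ∈ F i \ F j, X l with hvj
  have hui : vi * ∏ l ∈ F i, (X l : MvPolynomial (Fin n) k) = ∏ l ∈ F i ∪ F j, X l := by
    rw [← Finset.prod_union Finset.sdiff_disjoint]
    apply Finset.prod_congr _ (fun _ _ => rfl)
    rw [Finset.sdiff_union_self_eq_union, Finset.union_comm]
  have huj : vj * ∏ l ∈ F j, (X l : MvPolynomial (Fin n) k) = ∏ l ∈ F i ∪ F j, X l := by
    rw [← Finset.prod_union Finset.sdiff_disjoint]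
    apply Finset.prod_congr _ (fun _ _ => rfl)
    rw [Finset.sdiff_union_self_eq_union]
  set w : Fin m → MvPolynomial (Fin n) k := Pi.single i vi - Pi.single j vj with hw
  have hwker : w ∈ LinearMap.ker (phi (fun i : Fin m => ∏ l ∈ F i, (X l : MvPolynomial (Fin n) k))) := by
    rw [LinearMap.mem_ker, hw, map_sub, phi_single_s7, phi_single_s7, hui, huj, sub_self]
  rw [HasLinRel] at h
  rw [← h] at hwker
  have hpr := prA_span_linSyz F hinj hcard hA hwker
  have hiA : i ∈ A := SimpleGraph.Reachable.refl i
  have hjA : j ∉ A := hreach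
  rw [hw, map_sub, prA_single_mem hiA, prA_single_not_mem hjA, sub_zero] at hpr
  have hker := span_linSyz_le_ker _ hpr
  rw [LinearMap.mem_ker, phi_single_s7, hui] at hker
  exact u_ne_zero (k := k) (fun _ : Fin 1 => F i ∪ F j) 0 hker

end Forward
section Reverse
variable {k : Type*} [Field k] {n m d : ℕ}

lemma pic_sum {α : Type*} (s : Finset α) (j : ℕ) (f : α → (Fin m → MvPolynomial (Fin n) k)) :
    pic j (∑ t ∈ s, f t) = ∑ t ∈ s, pic j (f t) := by
  funext i
  rw [Finset.sum_apply, pic_apply, Finset.sum_apply]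
  simp only [pic_apply]
  rw [map_sum]

lemma pic_C_smul (j : ℕ) (c : k) (y : Fin m → MvPolynomial (Fin n) k) :
    pic j ((C c : MvPolynomial (Fin n) k) • y) = (C c : MvPolynomial (Fin n) k) • pic j y := by
  funext i
  simp only [pic_apply, Pi.smul_apply, smul_eq_mul]
  rw [homogeneousComponent_C_mul]

lemma theta_sum {α : Type*} (s : Finset α) (f : α → (Fin m → MvPolynomial (Fin n) k)) :
    theta (∑ t ∈ s, f t) = ∑ t ∈ s, theta (f t) := by
  funext i
  rw [Finset.sum_apply, theta, Finset.sum_apply]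
  simp only [theta]
  rw [map_sum]

lemma theta_C_smul (c : k) (y : Fin m → MvPolynomial (Fin n) k) :
    theta ((C c : MvPolynomial (Fin n) k) • y) = c • theta y := by
  funext i
  simp [theta]

lemma picHomog_C_smul_sum {α : Type*} (s : Finset α) (c : α → k)
    (f : α → (Fin m → MvPolynomial (Fin n) k)) (hf : ∀ t ∈ s, PicHomog 1 (f t)) :
    PicHomog 1 (∑ t ∈ s, (C (c t) : MvPolynomial (Fin n) k) • f t) := by
  intro p
  rw [Finset.sum_apply]
  apply MvPolynomial.IsHomogeneous.sum
  intro t ht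
  rw [Pi.smul_apply, smul_eq_mul, ← MvPolynomial.smul_eq_C_mul]
  exact Submodule.smul_mem (homogeneousSubmodule (Fin n) k 1) (c t)
    (show f t p ∈ homogeneousSubmodule (Fin n) k 1 from hf t ht p)

end Reverse
section ReverseMain
variable {k : Type*} [Field k] {n m d : ℕ}

set_option maxHeartbeats 1000000 in
set_option synthInstance.maxHeartbeats 400000 in
lemma reverse_core (hm : 2 ≤ m) (F : Fin m → Finset (Fin n))
    (hinj : Function.Injective F) (hcard : ∀ i, (F i).card = d)
    (hconn : (syzGraph F d).Connected) (β : Type*) [Fintype β]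
    (B : Module.Basis β (MvPolynomial (Fin n) k)
      (LinearMap.ker (phi (fun i : Fin m => ∏ l ∈ F i, (X l : MvPolynomial (Fin n) k))))) :
    HasLinRel (fun i : Fin m => ∏ l ∈ F i, (X l : MvPolynomial (Fin n) k)) := by
  classical
  rw [HasLinRel]
  refine le_antisymm (span_linSyz_le_ker _) ?_
  set K := LinearMap.ker (phi (fun i : Fin m => ∏ l ∈ F i, (X l : MvPolynomial (Fin n) k)))
    with hKdef
  set L := Submodule.span (MvPolynomial (Fin n) k)
    (linSyz (fun i : Fin m => ∏ l ∈ F i, (X l : MvPolynomial (Fin n) k))) with hLdef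
  have hm0 : 0 < m := by omega
  set i0 : Fin m := ⟨0, hm0⟩ with hi0
  have hreach : ∀ i, (syzGraph F d).Reachable i i0 := fun i => hconn.preconnected i i0
  set h : Fin m → (Fin m → MvPolynomial (Fin n) k) :=
    fun i => hWalk F hcard (hreach i).some with hh
  have hhL : ∀ i, h i ∈ L := fun i => hWalk_mem_span F hcard _
  have hhK : ∀ i, h i ∈ K := fun i => span_linSyz_le_ker _ (hhL i)
  have hhhom : ∀ i, PicHomog 1 (h i) := fun i => hWalk_homog F hcard _
  have hhtheta : ∀ i, theta (h i) = Pi.single i 1 - Pi.single i0 1 :=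
    fun i => theta_hWalk F hcard _
  have hth0 : theta (0 : Fin m → MvPolynomial (Fin n) k) = 0 := by
    funext i; simp [theta]
  -- key vanishing lemma
  have key1 : ∀ z : K, (∀ b, constantCoeff (B.repr z b) = 0) →
      PicHomog 1 (z : Fin m → MvPolynomial (Fin n) k) →
      (z : Fin m → MvPolynomial (Fin n) k) = 0 := by
    intro z hz hhom
    have hco : (z : Fin m → MvPolynomial (Fin n) k)
        = ∑ b, (B.repr z b) • ((B b : K) : Fin m → MvPolynomial (Fin n) k) := by
      conv_lhs => rw [← B.sum_repr z]
      rw [Submodule.coe_sum]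
      simp only [SetLike.val_smul]
    calc (z : Fin m → MvPolynomial (Fin n) k)
        = pic 1 (z : Fin m → MvPolynomial (Fin n) k) := (pic_of_homog hhom).symm
      _ = 0 := by
        rw [hco, pic_sum]
        apply Finset.sum_eq_zero
        intro b _
        rw [pic_smul]
        apply Finset.sum_eq_zero
        rintro ⟨a1, b1⟩ hab
        rw [Finset.HasAntidiagonal.mem_antidiagonal] at hab
        rcases (by omega : a1 = 0 ∧ b1 = 1 ∨ a1 = 1 ∧ b1 = 0) with ⟨rfl, rfl⟩ | ⟨rfl, rfl⟩
        · have h0 : homogeneousComponent 0 (B.repr z b) = 0 := by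
            rw [homogeneousComponent_zero,
              show coeff 0 (B.repr z b) = constantCoeff (B.repr z b) from rfl, hz b, map_zero]
          rw [h0, zero_smul]
        · rw [ker_pic_zero F hinj hcard (B b).2, smul_zero]
  haveI : Nonempty {i : Fin m // i ≠ i0} := by
    refine ⟨⟨⟨1, by omega⟩, ?_⟩⟩
    intro hh1
    rw [hi0] at hh1
    simp [Fin.ext_iff] at hh1
  set g : {i : Fin m // i ≠ i0} → β → k :=
    fun i b => constantCoeff (B.repr ⟨h i.1, hhK i.1⟩ b) with hg
  have PhiSum : ∀ (c : {i : Fin m // i ≠ i0} → k) (b : β),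
      constantCoeff (B.repr (∑ i, (C (c i) : MvPolynomial (Fin n) k) • (⟨h i.1, hhK i.1⟩ : K)) b)
        = ∑ i, c i * g i b := by
    intro c b
    rw [map_sum, Finsupp.finset_sum_apply, map_sum]
    apply Finset.sum_congr rfl
    intro i _
    rw [map_smul, Finsupp.smul_apply, smul_eq_mul, map_mul, constantCoeff_C, hg]
  have hcoe_sum : ∀ c : {i : Fin m // i ≠ i0} → k,
      ((∑ i, (C (c i) : MvPolynomial (Fin n) k) • (⟨h i.1, hhK i.1⟩ : K) : K)
          : Fin m → MvPolynomial (Fin n) k)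
        = ∑ i, (C (c i) : MvPolynomial (Fin n) k) • h i.1 := by
    intro c
    rw [Submodule.coe_sum]
    simp only [SetLike.val_smul]
  -- linear independence of g
  have hgind : LinearIndependent k g := by
    rw [Fintype.linearIndependent_iff]
    intro c hc
    have hPhiv : ∀ b, constantCoeff
        (B.repr (∑ i, (C (c i) : MvPolynomial (Fin n) k) • (⟨h i.1, hhK i.1⟩ : K)) b) = 0 := by
      intro b
      rw [PhiSum]
      have hb := congrFun hc b
      rw [Finset.sum_apply] at hb
      simpa using hb
    have hhomv : PicHomog 1
        ((∑ i, (C (c i) : MvPolynomial (Fin n) k) • (⟨h i.1, hhK i.1⟩ : K) : K)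
          : Fin m → MvPolynomial (Fin n) k) := by
      rw [hcoe_sum]
      exact picHomog_C_smul_sum _ _ _ (fun t _ => hhhom t.1)
    have hv0 := key1 _ hPhiv hhomv
    rw [hcoe_sum] at hv0
    have hth := congrArg theta hv0
    rw [theta_sum, hth0] at hth
    simp only [theta_C_smul, hhtheta] at hth
    intro i
    have he := congrFun hth i.1
    rw [Finset.sum_apply] at he
    rw [Finset.sum_eq_single i] at he
    · have h1 : ((Pi.single (i.1 : Fin m) 1 - Pi.single i0 1 : Fin m → k)) i.1 = 1 := by
        rw [Pi.sub_apply, Pi.single_eq_same, Pi.single_apply, if_neg i.2, sub_zero]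
      rw [Pi.smul_apply, h1, smul_eq_mul, mul_one] at he
      rw [he]
      rfl
    · intro j _ hne
      rw [Pi.smul_apply, Pi.sub_apply, Pi.single_apply, Pi.single_apply,
        if_neg (fun hh1 : (i.1 : Fin m) = j.1 => hne (Subtype.ext hh1.symm)), if_neg i.2]
      simp
    · intro habs
      exact absurd (Finset.mem_univ i) habs
  -- cardinality bounds
  have hBind : LinearIndependent (MvPolynomial (Fin n) k)
      (fun b : β => ((B b : K) : Fin m → MvPolynomial (Fin n) k)) :=
    B.linearIndependent.map' K.subtype (Submodule.ker_subtype K)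
  have hOind : LinearIndependent (MvPolynomial (Fin n) k)
      (fun o : Option β => Option.casesOn' o (Pi.single i0 1)
        (fun b => ((B b : K) : Fin m → MvPolynomial (Fin n) k))) := by
    rw [Fintype.linearIndependent_iff]
    intro gg hgg
    rw [Fintype.sum_option] at hgg
    simp only [Option.casesOn'_none, Option.casesOn'_some] at hgg
    have hsz : phi (fun i : Fin m => ∏ l ∈ F i, (X l : MvPolynomial (Fin n) k))
        (∑ b, gg (some b) • ((B b : K) : Fin m → MvPolynomial (Fin n) k)) = 0 := by
      rw [map_sum]
      apply Finset.sum_eq_zero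
      intro b _
      rw [map_smul, LinearMap.mem_ker.1 (B b).2, smul_zero]
    have hphi := congrArg (phi (fun i : Fin m => ∏ l ∈ F i, (X l : MvPolynomial (Fin n) k))) hgg
    rw [map_add, map_smul, phi_single_s7, one_mul, hsz, add_zero, map_zero, smul_eq_mul] at hphi
    have hnone : gg none = 0 := by
      rcases mul_eq_zero.1 hphi with h0 | h0
      · exact h0
      · exact absurd h0 (u_ne_zero F i0)
    intro o
    match o with
    | none => exact hnone
    | some b =>
      rw [hnone, zero_smul, zero_add] at hgg
      exact Fintype.linearIndependent_iff.1 hBind (fun b => gg (some b)) hgg b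
  have hrankpi : Module.finrank (MvPolynomial (Fin n) k)
      (Fin m → MvPolynomial (Fin n) k) = m := by
    rw [Module.finrank_pi, Fintype.card_fin]
  have hcount1 : Fintype.card β + 1 ≤ m := by
    have hle := hOind.fintype_card_le_finrank
    rw [hrankpi, Fintype.card_option] at hle
    exact hle
  have hcardι : Fintype.card {i : Fin m // i ≠ i0} = m - 1 := by
    have h1 : Fintype.card {i : Fin m // i = i0} = 1 := Fintype.card_subtype_eq i0
    have h2 := Fintype.card_subtype_compl (p := fun i : Fin m => i = i0)
    rw [h1, Fintype.card_fin] at h2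
    exact h2
  have hrankk : Module.finrank k (β → k) = Fintype.card β := Module.finrank_pi k
  have hcount2 : m - 1 ≤ Fintype.card β := by
    have hle := hgind.fintype_card_le_finrank
    rw [hrankk, hcardι] at hle
    exact hle
  have hcard_eq : Fintype.card {i : Fin m // i ≠ i0} = Module.finrank k (β → k) := by
    rw [hrankk, hcardι]
    omega
  have hspan := hgind.span_eq_top_of_card_eq_finrank hcard_eq
  -- decomposition of any element of K
  have hdecomp : ∀ z : K, ∃ c : {i : Fin m // i ≠ i0} → k, ∀ b,
      constantCoeff (B.repr (z - ∑ i, (C (c i) : MvPolynomial (Fin n) k)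
        • (⟨h i.1, hhK i.1⟩ : K)) b) = 0 := by
    intro z
    have hmem : (fun b => constantCoeff (B.repr z b)) ∈ Submodule.span k (Set.range g) := by
      rw [hspan]; exact Submodule.mem_top
    obtain ⟨c, hc⟩ := (Submodule.mem_span_range_iff_exists_fun k).1 hmem
    refine ⟨c, fun b => ?_⟩
    rw [map_sub, Finsupp.sub_apply, map_sub, PhiSum]
    have hb := congrFun hc b
    rw [Finset.sum_apply] at hb
    simp only [Pi.smul_apply, smul_eq_mul] at hb
    rw [hb, sub_self]
  -- main induction on degree
  have main : ∀ j : ℕ, ∀ z : K, PicHomog j (z : Fin m → MvPolynomial (Fin n) k) →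
      (z : Fin m → MvPolynomial (Fin n) k) ∈ L := by
    intro j
    induction j using Nat.strong_induction_on with
    | _ j IH =>
    intro z hz
    obtain ⟨c, hc⟩ := hdecomp z
    set w : Fin m → MvPolynomial (Fin n) k :=
      ∑ i, (C (c i) : MvPolynomial (Fin n) k) • h i.1 with hwdef
    have hwL : w ∈ L := by
      rw [hwdef]
      exact Submodule.sum_mem _ (fun i _ => Submodule.smul_mem _ _ (hhL i.1))
    set z' : K := z - ∑ i, (C (c i) : MvPolynomial (Fin n) k) • (⟨h i.1, hhK i.1⟩ : K) with hz'
    have hz'coe : (z' : Fin m → MvPolynomial (Fin n) k)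
        = (z : Fin m → MvPolynomial (Fin n) k) - w := by
      rw [hz', hwdef, Submodule.coe_sub, Submodule.coe_sum]
      simp only [SetLike.val_smul]
    have hzz : (z : Fin m → MvPolynomial (Fin n) k)
        = pic j (z' : Fin m → MvPolynomial (Fin n) k) + pic j w := by
      have hsplit : (z : Fin m → MvPolynomial (Fin n) k)
          = (z' : Fin m → MvPolynomial (Fin n) k) + w := by rw [hz'coe]; abel
      conv_lhs => rw [← pic_of_homog hz, hsplit, pic_add]
    have h1 : pic j w ∈ L := by
      rw [hwdef, pic_sum]
      apply Submodule.sum_mem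
      intro i _
      rw [pic_C_smul]
      apply Submodule.smul_mem
      by_cases hj1 : j = 1
      · subst hj1
        rw [pic_of_homog (hhhom i.1)]
        exact hhL i.1
      · have hz0 : pic j (h i.1) = 0 := by
          funext p
          rw [pic_apply, homogeneousComponent_of_mem
            (show h i.1 p ∈ homogeneousSubmodule (Fin n) k 1 from hhhom i.1 p), if_neg hj1]
          rfl
        rw [hz0]
        exact Submodule.zero_mem _
    have h2 : pic j (z' : Fin m → MvPolynomial (Fin n) k) ∈ L := by
      have hco : (z' : Fin m → MvPolynomial (Fin n) k)
          = ∑ b, (B.repr z' b) • ((B b : K) : Fin m → MvPolynomial (Fin n) k) := by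
        conv_lhs => rw [← B.sum_repr z']
        rw [Submodule.coe_sum]
        simp only [SetLike.val_smul]
      rw [hco, pic_sum]
      apply Submodule.sum_mem
      intro b _
      rw [pic_smul]
      apply Submodule.sum_mem
      rintro ⟨a1, b1⟩ hab
      rw [Finset.HasAntidiagonal.mem_antidiagonal] at hab
      by_cases ha1 : a1 = 0
      · subst ha1
        have h0 : homogeneousComponent 0 (B.repr z' b) = 0 := by
          rw [homogeneousComponent_zero,
            show coeff 0 (B.repr z' b) = constantCoeff (B.repr z' b) from rfl, hz', hc b]
          simp
        rw [h0, zero_smul]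
        exact Submodule.zero_mem _
      · have hb1 : b1 < j := by omega
        apply Submodule.smul_mem
        exact IH b1 hb1 ⟨pic b1 ((B b : K) : Fin m → MvPolynomial (Fin n) k),
          ker_pic F hcard b1 (B b).2⟩ (picHomog_pic b1 _)
    rw [hzz]
    exact Submodule.add_mem _ h2 h1
  -- conclude
  intro z hzK
  have hdec : z = ∑ j ∈ Finset.range (Finset.univ.sup (fun i => (z i).totalDegree) + 1),
      pic j z := by
    funext i
    rw [Finset.sum_apply]
    simp only [pic_apply]
    conv_lhs => rw [← sum_homogeneousComponent (z i)]
    refine Finset.sum_subset ?_ ?_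
    · apply Finset.range_subset_range.2
      have hle : (z i).totalDegree ≤ Finset.univ.sup (fun i => (z i).totalDegree) :=
        Finset.le_sup (f := fun i => (z i).totalDegree) (Finset.mem_univ i)
      omega
    · intro j _ hj
      rw [Finset.mem_range, not_lt] at hj
      exact homogeneousComponent_eq_zero _ _ (by omega)
  rw [hdec]
  apply Submodule.sum_mem
  intro j _
  exact main j ⟨pic j z, ker_pic F hcard j hzK⟩ (picHomog_pic j z)

lemma reverse_direction (hm : 2 ≤ m) (F : Fin m → Finset (Fin n))
    (hinj : Function.Injective F) (hcard : ∀ i, (F i).card = d)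
    (hfree : Module.Free (MvPolynomial (Fin n) k)
      (LinearMap.ker (phi (fun i : Fin m => ∏ l ∈ F i, (X l : MvPolynomial (Fin n) k)))))
    (hconn : (syzGraph F d).Connected) :
    HasLinRel (fun i : Fin m => ∏ l ∈ F i, (X l : MvPolynomial (Fin n) k)) := by
  classical
  haveI hfinK : Module.Finite (MvPolynomial (Fin n) k)
      (LinearMap.ker (phi (fun i : Fin m => ∏ l ∈ F i, (X l : MvPolynomial (Fin n) k)))) :=
    Module.Finite.iff_fg.2 (IsNoetherian.noetherian _)
  haveI := hfree
  haveI : Fintype (Module.Free.ChooseBasisIndex (MvPolynomial (Fin n) k)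
      (LinearMap.ker (phi (fun i : Fin m => ∏ l ∈ F i, (X l : MvPolynomial (Fin n) k))))) :=
    Module.Free.ChooseBasisIndex.fintype _ _
  exact reverse_core hm F hinj hcard hconn _ (Module.Free.chooseBasis _ _)

end ReverseMain
/-- If `m ≥ 2` and the first syzygy module `ker φ` is a free `S`-module
(i.e. `projdim I ≤ 1`), then `I` has linear relations iff `G_I` is connected. -/
theorem stmt7 {k : Type*} [Field k] {n m d : ℕ} (hm : 2 ≤ m)
    (F : Fin m → Finset (Fin n)) (hinj : Function.Injective F)
    (hcard : ∀ i, (F i).card = d)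
    (hfree : Module.Free (MvPolynomial (Fin n) k)
      (LinearMap.ker (phi (fun i : Fin m => ∏ l ∈ F i, (X l : MvPolynomial (Fin n) k))))) :
    HasLinRel (fun i : Fin m => ∏ l ∈ F i, (X l : MvPolynomial (Fin n) k)) ↔
      (syzGraph F d).Connected := by
  constructor
  · exact forward_direction hm F hinj hcard
  · exact reverse_direction hm F hinj hcard hfree
end

section
/- Assume that I has linear quotients and that G_I is a tree. Let v be a squarefree monomial of degree d with v ∉ G(I) such that v is a leaf of the syzygy graph G_{⟨I,v⟩} of the ideal ⟨I, v⟩, i.e., v is adjacent in G_{⟨I,v⟩} to exactly one generator u_i of I; write F(u_i) ∖ F(v) = {l}. Then ⟨I, v⟩ has linear quotients if and only if l ∈ F(u_t) for all t = 1,…,m. -/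
open MvPolynomial Finset

attribute [local instance] Classical.propDecidable

open MvPolynomial Finset

attribute [local instance] Classical.propDecidable

namespace Stmt8Aux

variable {k : Type*} [Field k] {n : ℕ}

noncomputable def mon (A : Finset (Fin n)) : MvPolynomial (Fin n) k := ∏ a ∈ A, X a

noncomputable def eF (A : Finset (Fin n)) : (Fin n) →₀ ℕ := ∑ a ∈ A, Finsupp.single a 1

lemma eF_apply (A : Finset (Fin n)) (b : Fin n) :
    eF A b = if b ∈ A then 1 else 0 := by
  classical
  rw [eF, Finset.sum_apply']
  simp [Finsupp.single_apply]

lemma mon_eq (A : Finset (Fin n)) : (mon A : MvPolynomial (Fin n) k) = monomial (eF A) 1 := by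
  classical
  induction A using Finset.induction_on with
  | empty => simp [mon, eF]
  | @insert a A ha ih =>
    have he : eF (insert a A) = Finsupp.single a 1 + eF A := by
      rw [eF, eF, Finset.sum_insert ha]
    rw [mon, Finset.prod_insert ha, ← mon, ih, he, X, monomial_mul, one_mul]

lemma eF_le_iff {A : Finset (Fin n)} {μ : (Fin n) →₀ ℕ} :
    eF A ≤ μ ↔ ∀ a ∈ A, 1 ≤ μ a := by
  rw [Finsupp.le_def]
  constructor
  · intro h a ha
    have := h a
    rwa [eF_apply, if_pos ha] at this
  · intro h a
    by_cases ha : a ∈ A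
    · rw [eF_apply, if_pos ha]; exact h a ha
    · rw [eF_apply, if_neg ha]; exact Nat.zero_le _

lemma eF_le_eF {A C : Finset (Fin n)} : eF A ≤ eF C ↔ A ⊆ C := by
  rw [eF_le_iff]
  constructor
  · intro h a ha
    have := h a ha
    rw [eF_apply] at this
    by_contra hc
    rw [if_neg hc] at this
    omega
  · intro h a ha
    rw [eF_apply, if_pos (h ha)]

lemma eF_le_add_iff {A B : Finset (Fin n)} {μ : (Fin n) →₀ ℕ} :
    eF A ≤ μ + eF B ↔ eF (A \ B) ≤ μ := by
  rw [eF_le_iff, eF_le_iff]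
  constructor
  · intro h a ha
    rw [Finset.mem_sdiff] at ha
    have := h a ha.1
    rw [Finsupp.add_apply, eF_apply, if_neg ha.2] at this
    omega
  · intro h a ha
    rw [Finsupp.add_apply, eF_apply]
    by_cases hb : a ∈ B
    · rw [if_pos hb]; omega
    · rw [if_neg hb]
      have := h a (Finset.mem_sdiff.mpr ⟨ha, hb⟩)
      omega

lemma mem_span_mon {S : Set (Finset (Fin n))} {f : MvPolynomial (Fin n) k} :
    f ∈ Ideal.span (mon '' S) ↔ ∀ μ ∈ f.support, ∃ A ∈ S, eF A ≤ μ := by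
  have himg : (mon '' S : Set (MvPolynomial (Fin n) k))
      = (fun s => monomial s (1 : k)) '' (eF '' S) := by
    rw [Set.image_image]
    exact Set.image_congr fun A _ => mon_eq A
  rw [himg, mem_ideal_span_monomial_image]
  constructor
  · intro h μ hμ
    obtain ⟨si, ⟨A, hA, rfl⟩, h2⟩ := h μ hμ
    exact ⟨A, hA, h2⟩
  · intro h μ hμ
    obtain ⟨A, hA, h2⟩ := h μ hμ
    exact ⟨eF A, ⟨A, hA, rfl⟩, h2⟩

lemma support_mon (C : Finset (Fin n)) :
    (mon C : MvPolynomial (Fin n) k).support = {eF C} := by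
  classical
  rw [mon_eq, support_monomial, if_neg one_ne_zero]

lemma mon_mem_span_mon {S : Set (Finset (Fin n))} {C : Finset (Fin n)} :
    (mon C : MvPolynomial (Fin n) k) ∈ Ideal.span (mon '' S) ↔ ∃ A ∈ S, A ⊆ C := by
  rw [mem_span_mon]
  constructor
  · intro h
    obtain ⟨A, hA, hle⟩ := h (eF C) (by rw [support_mon]; exact Finset.mem_singleton_self _)
    exact ⟨A, hA, eF_le_eF.mp hle⟩
  · intro ⟨A, hA, hsub⟩ μ hμ
    rw [support_mon, Finset.mem_singleton] at hμ
    subst hμ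
    exact ⟨A, hA, eF_le_eF.mpr hsub⟩

lemma mon_singleton (a : Fin n) : (mon {a} : MvPolynomial (Fin n) k) = X a := by
  simp [mon]

lemma mon_mem_span_X {T : Set (Fin n)} {C : Finset (Fin n)} :
    (mon C : MvPolynomial (Fin n) k) ∈ Ideal.span (X '' T) ↔ ∃ a ∈ T, a ∈ C := by
  rw [mem_ideal_span_X_image]
  constructor
  · intro h
    obtain ⟨a, ha, hne⟩ := h (eF C) (by rw [support_mon]; exact Finset.mem_singleton_self _)
    refine ⟨a, ha, ?_⟩
    rw [eF_apply] at hne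
    by_contra hc
    rw [if_neg hc] at hne
    exact hne rfl
  · intro ⟨a, ha, hC⟩ μ hμ
    rw [support_mon, Finset.mem_singleton] at hμ
    subst hμ
    exact ⟨a, ha, by rw [eF_apply, if_pos hC]; omega⟩

lemma mon_sdiff_mul (A Bt : Finset (Fin n)) :
    (mon (A \ Bt) : MvPolynomial (Fin n) k) * mon Bt = mon (Bt \ A) * mon A := by
  rw [mon, mon, mon, mon, ← Finset.prod_union Finset.sdiff_disjoint,
    ← Finset.prod_union Finset.sdiff_disjoint, Finset.sdiff_union_self_eq_union,
    Finset.sdiff_union_self_eq_union, Finset.union_comm]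

lemma colon_span_mon (S : Set (Finset (Fin n))) (Bt : Finset (Fin n)) :
    Submodule.colon (Ideal.span (mon '' S)) ((Ideal.span {(mon Bt : MvPolynomial (Fin n) k)} : Ideal (MvPolynomial (Fin n) k)) : Set (MvPolynomial (Fin n) k)) =
      Ideal.span (mon '' ((· \ Bt) '' S)) := by
  apply le_antisymm
  · intro r hr
    rw [Ideal.mem_colon_span_singleton] at hr
    rw [mem_span_mon]
    rw [mem_span_mon] at hr
    intro μ hμ
    have hsup : μ + eF Bt ∈ (r * mon Bt).support := by
      rw [MvPolynomial.mem_support_iff] at hμ ⊢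
      rw [mon_eq, MvPolynomial.coeff_mul_monomial]
      simpa using hμ
    obtain ⟨A, hA, hle⟩ := hr _ hsup
    exact ⟨A \ Bt, ⟨A, hA, rfl⟩, eF_le_add_iff.mp hle⟩
  · rw [Ideal.span_le]
    rintro _ ⟨_, ⟨A, hA, rfl⟩, rfl⟩
    rw [SetLike.mem_coe, Ideal.mem_colon_span_singleton, mon_sdiff_mul]
    exact Ideal.mul_mem_left _ _ (Ideal.subset_span ⟨A, hA, rfl⟩)

end Stmt8Aux

/-- Suppose `I` has linear quotients, `G_I` is a tree, and `v` is a squarefree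
monomial of degree `d` (with support `B`) not among the generators of `I`, which is a leaf
of the syzygy graph of `⟨I, v⟩`, adjacent only to the generator `u i₀`; write
`F i₀ \ B = {l}`. Then `⟨I, v⟩` has linear quotients iff `l ∈ F t` for all `t`. -/
theorem stmt8 {k : Type*} [Field k] {n m d : ℕ}
    (F : Fin m → Finset (Fin n)) (hinj : Function.Injective F)
    (hcard : ∀ i, (F i).card = d)
    (hLQ : LinQuot (fun i : Fin m => ∏ l ∈ F i, (X l : MvPolynomial (Fin n) k)))
    (htree : (syzGraph F d).IsTree)
    (B : Finset (Fin n)) (hB : B.card = d) (hBnew : ∀ j, F j ≠ B)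
    (i₀ : Fin m)
    (hleaf : (syzGraph (Fin.snoc F B) d).Adj (Fin.last m) (Fin.castSucc i₀))
    (honly : ∀ j : Fin m, j ≠ i₀ →
      ¬ (syzGraph (Fin.snoc F B) d).Adj (Fin.last m) (Fin.castSucc j))
    (l : Fin n) (hl : F i₀ \ B = {l}) :
    LinQuot (fun i : Fin (m + 1) =>
        ∏ a ∈ (Fin.snoc F B : Fin (m + 1) → Finset (Fin n)) i, (X a : MvPolynomial (Fin n) k)) ↔
      ∀ t : Fin m, l ∈ F t := by
  classical
  have hlFB : l ∈ F i₀ ∧ l ∉ B := by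
    have h : l ∈ F i₀ \ B := by rw [hl]; exact Finset.mem_singleton_self l
    exact ⟨(Finset.mem_sdiff.mp h).1, (Finset.mem_sdiff.mp h).2⟩
  have hd : 1 ≤ d := by
    have := hleaf.2; omega
  have hsd : ∀ t : Fin m, (F t \ B).Nonempty := by
    intro t
    rw [Finset.sdiff_nonempty]
    intro hsub
    exact hBnew t (Finset.eq_of_subset_of_card_le hsub (by rw [hcard, hB]))
  have hsdB : ∀ t : Fin m, (B \ F t).Nonempty := by
    intro t
    rw [Finset.sdiff_nonempty]
    intro hsub
    exact hBnew t (Finset.eq_of_subset_of_card_le hsub (by rw [hcard, hB])).symm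
  have hadjkey : ∀ t : Fin m, (F t ∩ B).card + 1 = d → t = i₀ := by
    intro t hc
    by_contra hne
    refine honly t hne ⟨(Fin.castSucc_lt_last t).ne', ?_⟩
    rw [Fin.snoc_last, Fin.snoc_castSucc, Finset.inter_comm]
    exact hc
  have hkeyF : ∀ (t : Fin m) (a : Fin n), F t \ B = {a} → t = i₀ ∧ a = l := by
    intro t a h
    have h1 := Finset.card_sdiff_add_card_inter (F t) B
    rw [h, Finset.card_singleton, hcard] at h1
    have ht : t = i₀ := hadjkey t (by omega)
    subst ht
    rw [hl] at h
    exact ⟨rfl, (Finset.singleton_inj.mp h).symm⟩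
  have hkeyB : ∀ (t : Fin m) (a : Fin n), B \ F t = {a} → t = i₀ := by
    intro t a h
    have h1 := Finset.card_sdiff_add_card_inter B (F t)
    rw [h, Finset.card_singleton, hB, Finset.inter_comm] at h1
    exact hadjkey t (by omega)
  have hsubsing : ∀ (C : Finset (Fin n)) (a : Fin n), C.Nonempty → C ⊆ {a} → C = {a} := by
    intro C a hCne hsub
    rcases Finset.subset_singleton_iff.mp hsub with h | h
    · rw [h] at hCne; exact absurd hCne Finset.not_nonempty_empty
    · exact h
  constructor
  · rintro ⟨σ', hσ'⟩ t
    by_contra hlt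
    set P : Finset (Fin (m + 1)) :=
      Finset.univ.filter (fun q => ∃ s : Fin m, σ' q = Fin.castSucc s ∧ l ∉ F s) with hP
    have hPne : P.Nonempty := ⟨σ'.symm (Fin.castSucc t), by
      simp only [hP, Finset.mem_filter, Finset.mem_univ, true_and]
      exact ⟨t, σ'.apply_symm_apply _, hlt⟩⟩
    obtain ⟨q₀, hq₀P, hq₀min⟩ := Finset.exists_min_image P id hPne
    simp only [hP, Finset.mem_filter, Finset.mem_univ, true_and] at hq₀P
    obtain ⟨s₀, hs₀, hls₀⟩ := hq₀P
    have hmin : ∀ j : Fin (m + 1), j < q₀ → ∀ s : Fin m, σ' j = Fin.castSucc s → l ∈ F s := by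
      intro j hj s hjs
      by_contra hc
      have hjP : j ∈ P := by
        simp only [hP, Finset.mem_filter, Finset.mem_univ, true_and]
        exact ⟨s, hjs, hc⟩
      exact absurd hj (not_lt.mpr (hq₀min j hjP))
    have himgNoLast : ∀ q : Fin (m + 1), (∀ j, j < q → σ' j ≠ Fin.last m) →
        ((fun j => (∏ a ∈ (Fin.snoc F B : Fin (m + 1) → Finset (Fin n)) (σ' j), X a : MvPolynomial (Fin n) k)) ''
            {j : Fin (m + 1) | j < q})
          = Stmt8Aux.mon '' (F '' {s : Fin m | σ'.symm (Fin.castSucc s) < q}) := by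
      intro q hq
      ext f
      constructor
      · rintro ⟨j, hj, rfl⟩
        obtain ⟨s, hs⟩ := Fin.exists_castSucc_eq.mpr (hq j hj)
        refine ⟨F s, ⟨s, ?_, rfl⟩, ?_⟩
        · show σ'.symm (Fin.castSucc s) < q
          rw [hs, Equiv.symm_apply_apply]
          exact hj
        · show (Stmt8Aux.mon (F s) : MvPolynomial (Fin n) k)
            = ∏ a ∈ (Fin.snoc F B : Fin (m + 1) → Finset (Fin n)) (σ' j), X a
          rw [← hs, Fin.snoc_castSucc]
          rfl
      · rintro ⟨_, ⟨s, hs, rfl⟩, rfl⟩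
        refine ⟨σ'.symm (Fin.castSucc s), hs, ?_⟩
        show (∏ a ∈ (Fin.snoc F B : Fin (m + 1) → Finset (Fin n)) (σ' (σ'.symm (Fin.castSucc s))), X a : MvPolynomial (Fin n) k)
          = Stmt8Aux.mon (F s)
        rw [Equiv.apply_symm_apply, Fin.snoc_castSucc]
        rfl
    have himgLast : ∀ q : Fin (m + 1), σ'.symm (Fin.last m) < q →
        ((fun j => (∏ a ∈ (Fin.snoc F B : Fin (m + 1) → Finset (Fin n)) (σ' j), X a : MvPolynomial (Fin n) k)) ''
            {j : Fin (m + 1) | j < q})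
          = Stmt8Aux.mon '' (insert B (F '' {s : Fin m | σ'.symm (Fin.castSucc s) < q})) := by
      intro q hq
      ext f
      constructor
      · rintro ⟨j, hj, rfl⟩
        by_cases hjl : σ' j = Fin.last m
        · refine ⟨B, Set.mem_insert _ _, ?_⟩
          show (Stmt8Aux.mon B : MvPolynomial (Fin n) k) = ∏ a ∈ (Fin.snoc F B : Fin (m + 1) → Finset (Fin n)) (σ' j), X a
          rw [hjl, Fin.snoc_last]
          rfl
        · obtain ⟨s, hs⟩ := Fin.exists_castSucc_eq.mpr hjl
          refine ⟨F s, Set.mem_insert_of_mem _ ⟨s, ?_, rfl⟩, ?_⟩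
          · show σ'.symm (Fin.castSucc s) < q
            rw [hs, Equiv.symm_apply_apply]
            exact hj
          · show (Stmt8Aux.mon (F s) : MvPolynomial (Fin n) k)
              = ∏ a ∈ (Fin.snoc F B : Fin (m + 1) → Finset (Fin n)) (σ' j), X a
            rw [← hs, Fin.snoc_castSucc]
            rfl
      · rintro ⟨A, hA, rfl⟩
        rcases Set.mem_insert_iff.mp hA with hAB | ⟨s, hs, rfl⟩
        · rw [hAB]
          refine ⟨σ'.symm (Fin.last m), hq, ?_⟩
          show (∏ a ∈ (Fin.snoc F B : Fin (m + 1) → Finset (Fin n)) (σ' (σ'.symm (Fin.last m))), X a : MvPolynomial (Fin n) k)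
            = Stmt8Aux.mon B
          rw [Equiv.apply_symm_apply, Fin.snoc_last]
          rfl
        · refine ⟨σ'.symm (Fin.castSucc s), hs, ?_⟩
          show (∏ a ∈ (Fin.snoc F B : Fin (m + 1) → Finset (Fin n)) (σ' (σ'.symm (Fin.castSucc s))), X a : MvPolynomial (Fin n) k)
            = Stmt8Aux.mon (F s)
          rw [Equiv.apply_symm_apply, Fin.snoc_castSucc]
          rfl
    set p := σ'.symm (Fin.last m) with hpdef
    have hσp : σ' p = Fin.last m := σ'.apply_symm_apply _
    have claim1 : p.val ≠ 0 → ∀ s : Fin m, σ'.symm (Fin.castSucc s) < p → l ∈ F s := by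
      intro hp0 s hs
      obtain ⟨T, hT⟩ := hσ' p hp0
      beta_reduce at hT
      rw [himgNoLast p (fun j hj hje =>
        absurd (σ'.injective (hje.trans hσp.symm)) (Fin.ne_of_lt hj)), hσp, Fin.snoc_last,
        show (∏ a ∈ B, (X a : MvPolynomial (Fin n) k)) = Stmt8Aux.mon B from rfl,
        Stmt8Aux.colon_span_mon] at hT
      have hTl : ∀ a ∈ T, a = l := by
        intro a ha
        have hXa : (Stmt8Aux.mon {a} : MvPolynomial (Fin n) k) ∈ Ideal.span (X '' T) := by
          rw [Stmt8Aux.mon_singleton]; exact Ideal.subset_span ⟨a, ha, rfl⟩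
        rw [← hT, Stmt8Aux.mon_mem_span_mon] at hXa
        obtain ⟨_, ⟨_, ⟨s', _, rfl⟩, rfl⟩, hsub⟩ := hXa
        exact (hkeyF s' a (hsubsing _ a (hsd s') hsub)).2
      have hmem : (Stmt8Aux.mon (F s \ B) : MvPolynomial (Fin n) k) ∈ Ideal.span (X '' T) := by
        rw [← hT]
        exact Ideal.subset_span ⟨F s \ B, ⟨F s, ⟨s, hs, rfl⟩, rfl⟩, rfl⟩
      rw [Stmt8Aux.mon_mem_span_X] at hmem
      obtain ⟨a, haT, haC⟩ := hmem
      rw [hTl a haT] at haC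
      exact (Finset.mem_sdiff.mp haC).1
    have hq₀s : σ'.symm (Fin.castSucc s₀) = q₀ := by rw [← hs₀, Equiv.symm_apply_apply]
    have hpq : p < q₀ := by
      rcases lt_trichotomy p q₀ with h | h | h
      · exact h
      · exfalso
        rw [h] at hσp
        rw [hσp] at hs₀
        exact (Fin.castSucc_lt_last s₀).ne' hs₀
      · exfalso
        have hp0 : p.val ≠ 0 := by
          have : q₀.val < p.val := h
          omega
        exact hls₀ (claim1 hp0 s₀ (by rw [hq₀s]; exact h))
    have hq₀0 : q₀.val ≠ 0 := by
      have : p.val < q₀.val := hpq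
      omega
    obtain ⟨T, hT⟩ := hσ' q₀ hq₀0
    beta_reduce at hT
    rw [himgLast q₀ hpq, hs₀, Fin.snoc_castSucc,
      show (∏ a ∈ F s₀, (X a : MvPolynomial (Fin n) k)) = Stmt8Aux.mon (F s₀) from rfl,
      Stmt8Aux.colon_span_mon] at hT
    have hTl : ∀ a ∈ T, a = l := by
      intro a ha
      have hXa : (Stmt8Aux.mon {a} : MvPolynomial (Fin n) k) ∈ Ideal.span (X '' T) := by
        rw [Stmt8Aux.mon_singleton]; exact Ideal.subset_span ⟨a, ha, rfl⟩
      rw [← hT, Stmt8Aux.mon_mem_span_mon] at hXa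
      obtain ⟨_, ⟨A, hA, rfl⟩, hsub⟩ := hXa
      rcases Set.mem_insert_iff.mp hA with hAB | ⟨s, hsp, rfl⟩
      · exfalso
        rw [hAB] at hsub
        have hBs : B \ F s₀ = {a} := hsubsing _ a (hsdB s₀) hsub
        have hsi : s₀ = i₀ := hkeyB s₀ a hBs
        rw [hsi] at hls₀
        exact hls₀ hlFB.1
      · have hsp' : σ'.symm (Fin.castSucc s) < q₀ := hsp
        have hne : (F s \ F s₀).Nonempty := by
          rw [Finset.sdiff_nonempty]
          intro hsub2
          have heq : F s = F s₀ := Finset.eq_of_subset_of_card_le hsub2 (by rw [hcard, hcard])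
          have hss : s = s₀ := hinj heq
          rw [hss, hq₀s] at hsp'
          exact lt_irrefl _ hsp'
        have heq : F s \ F s₀ = {a} := hsubsing _ a hne hsub
        have hls : l ∈ F s := hmin _ hsp' s (σ'.apply_symm_apply _)
        have hmem : l ∈ F s \ F s₀ := Finset.mem_sdiff.mpr ⟨hls, hls₀⟩
        rw [heq, Finset.mem_singleton] at hmem
        exact hmem.symm
    have hBmem : (Stmt8Aux.mon (B \ F s₀) : MvPolynomial (Fin n) k) ∈ Ideal.span (X '' T) := by
      rw [← hT]
      exact Ideal.subset_span ⟨B \ F s₀, ⟨B, Set.mem_insert _ _, rfl⟩, rfl⟩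
    rw [Stmt8Aux.mon_mem_span_X] at hBmem
    obtain ⟨a, haT, haC⟩ := hBmem
    rw [hTl a haT] at haC
    exact hlFB.2 (Finset.mem_sdiff.mp haC).1
  · intro hall
    obtain ⟨σ, hσ⟩ := hLQ
    set σ' : Equiv.Perm (Fin (m + 1)) :=
      (finSuccEquivLast (n := m)).symm.permCongr σ.optionCongr with hσ'def
    have hcs : ∀ j : Fin m, σ' (Fin.castSucc j) = Fin.castSucc (σ j) := by
      intro j
      simp [hσ'def, Equiv.permCongr_apply, finSuccEquivLast_castSucc,
        finSuccEquivLast_symm_some]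
    have hlast : σ' (Fin.last m) = Fin.last m := by
      simp [hσ'def, Equiv.permCongr_apply, finSuccEquivLast_last,
        finSuccEquivLast_symm_none]
    refine ⟨σ', ?_⟩
    intro i hi
    by_cases hil : i = Fin.last m
    · subst hil
      refine ⟨{l}, ?_⟩
      beta_reduce
      have himg : ((fun j => (∏ a ∈ (Fin.snoc F B : Fin (m + 1) → Finset (Fin n)) (σ' j), X a : MvPolynomial (Fin n) k)) ''
            {j : Fin (m + 1) | j < Fin.last m})
          = Stmt8Aux.mon '' (F '' Set.univ) := by
        ext f
        constructor
        · rintro ⟨j, hj, rfl⟩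
          have hjne : j ≠ Fin.last m := Fin.ne_of_lt hj
          obtain ⟨c, hc⟩ := Fin.exists_castSucc_eq.mpr hjne
          refine ⟨F (σ c), ⟨σ c, Set.mem_univ _, rfl⟩, ?_⟩
          show (Stmt8Aux.mon (F (σ c)) : MvPolynomial (Fin n) k)
            = ∏ a ∈ (Fin.snoc F B : Fin (m + 1) → Finset (Fin n)) (σ' j), X a
          rw [← hc, hcs, Fin.snoc_castSucc]
          rfl
        · rintro ⟨_, ⟨s, _, rfl⟩, rfl⟩
          refine ⟨Fin.castSucc (σ.symm s), Fin.castSucc_lt_last _, ?_⟩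
          show (∏ a ∈ (Fin.snoc F B : Fin (m + 1) → Finset (Fin n)) (σ' (Fin.castSucc (σ.symm s))), X a : MvPolynomial (Fin n) k)
            = Stmt8Aux.mon (F s)
          rw [hcs, Equiv.apply_symm_apply, Fin.snoc_castSucc]
          rfl
      rw [himg, hlast, Fin.snoc_last,
        show (∏ a ∈ B, (X a : MvPolynomial (Fin n) k)) = Stmt8Aux.mon B from rfl,
        Stmt8Aux.colon_span_mon]
      apply le_antisymm
      · rw [Ideal.span_le]
        rintro _ ⟨_, ⟨_, ⟨s, _, rfl⟩, rfl⟩, rfl⟩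
        rw [SetLike.mem_coe]
        show (Stmt8Aux.mon (F s \ B) : MvPolynomial (Fin n) k) ∈ _
        rw [Stmt8Aux.mon_mem_span_X]
        exact ⟨l, rfl, Finset.mem_sdiff.mpr ⟨hall s, hlFB.2⟩⟩
      · rw [Ideal.span_le]
        rintro _ ⟨a, ha, rfl⟩
        rw [Set.mem_singleton_iff] at ha
        rw [ha]
        rw [SetLike.mem_coe, ← Stmt8Aux.mon_singleton]
        exact Ideal.subset_span ⟨({l} : Finset (Fin n)), ⟨F i₀, ⟨i₀, Set.mem_univ _, rfl⟩, hl⟩, rfl⟩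
    · obtain ⟨j, rfl⟩ := Fin.exists_castSucc_eq.mpr hil
      have hj0 : j.val ≠ 0 := by simpa using hi
      obtain ⟨T, hTold⟩ := hσ j hj0
      refine ⟨T, ?_⟩
      beta_reduce
      have himg2 : ((fun a => (∏ x ∈ (Fin.snoc F B : Fin (m + 1) → Finset (Fin n)) (σ' a), X x : MvPolynomial (Fin n) k)) ''
            {a : Fin (m + 1) | a < Fin.castSucc j})
          = ((fun a => (∏ x ∈ F (σ a), X x : MvPolynomial (Fin n) k)) '' {a : Fin m | a < j}) := by
        ext f
        constructor
        · rintro ⟨b, hb, rfl⟩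
          have hbl : b ≠ Fin.last m := by
            intro h
            rw [h] at hb
            exact absurd hb (not_lt.mpr (Fin.le_last _))
          obtain ⟨c, hc⟩ := Fin.exists_castSucc_eq.mpr hbl
          refine ⟨c, ?_, ?_⟩
          · show c < j
            rw [← hc] at hb
            exact Fin.castSucc_lt_castSucc_iff.mp hb
          · show (∏ x ∈ F (σ c), X x : MvPolynomial (Fin n) k)
              = ∏ x ∈ (Fin.snoc F B : Fin (m + 1) → Finset (Fin n)) (σ' b), X x
            rw [← hc, hcs, Fin.snoc_castSucc]
        · rintro ⟨c, hc, rfl⟩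
          refine ⟨Fin.castSucc c, Fin.castSucc_lt_castSucc_iff.mpr hc, ?_⟩
          show (∏ x ∈ (Fin.snoc F B : Fin (m + 1) → Finset (Fin n)) (σ' (Fin.castSucc c)), X x : MvPolynomial (Fin n) k)
            = ∏ x ∈ F (σ c), X x
          rw [hcs, Fin.snoc_castSucc]
      rw [himg2, hcs, Fin.snoc_castSucc]
      exact hTold
end
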